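/- arXiv:1805.08758 — 4 statements merged into one kernel-verified Lean document; each statement's English description precedes it below -/
import Mathlib

section
/- In a flow network, every firm's flow-based choice function satisfies the irrelevance of rejected contracts (IRC) condition: for any sets of contracts Y, Z with C^f(Y) ⊆ Z ⊆ Y, we have C^f(Z) = C^f(Y). -/
open Finset

/-- A trading network: firms `F`, contracts `X`, seller/buyer maps, and choice functions. -/
structure TradingNetwork (F X : Type) where
  sell : X → F
  buy  : X → F
  C : F → Finset X → Finset X

namespace TradingNetwork

variable {F X : Type} [DecidableEq F] [DecidableEq X] [Fintype X]

/-- The contracts in `Y` involving firm `f`. -/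
def own (N : TradingNetwork F X) (f : F) (Y : Finset X) : Finset X :=
  Y.filter fun x => N.sell x = f ∨ N.buy x = f

/-- Upstream contracts of `f` (contracts where `f` is the buyer). -/
def XB (N : TradingNetwork F X) (f : F) : Finset X := univ.filter fun x => N.buy x = f

/-- Downstream contracts of `f` (contracts where `f` is the seller). -/
def XS (N : TradingNetwork F X) (f : F) : Finset X := univ.filter fun x => N.sell x = f

/-- A terminal agent: a terminal seller (no upstream contracts) or terminal buyer. -/
def Terminal (N : TradingNetwork F X) (f : F) : Prop := N.XB f = ∅ ∨ N.XS f = ∅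

/-- `S` consists of the `k` most preferred elements of `Y` according to the
rank function `r` (lower rank = more preferred). -/
def IsTop (r : X → ℕ) (k : ℕ) (Y S : Finset X) : Prop :=
  S ⊆ Y ∧ S.card = k ∧ ∀ x ∈ S, ∀ y ∈ Y, y ∉ S → r x < r y

/-- The choice functions of `N` are flow-based with respect to the preference ranks
`rkB` (over upstream contracts) and `rkS` (over downstream contracts): terminal agents
accept everything, and a non-terminal agent offered upstream contracts `Y ∩ XB f` and
downstream contracts `Y ∩ XS f` chooses its `k = min (|Y ∩ XB f|) (|Y ∩ XS f|)` most
preferred contracts on each side. -/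
structure FlowBased (N : TradingNetwork F X) (rkB rkS : F → X → ℕ) : Prop where
  injB : ∀ f, ∀ x ∈ N.XB f, ∀ y ∈ N.XB f, rkB f x = rkB f y → x = y
  injS : ∀ f, ∀ x ∈ N.XS f, ∀ y ∈ N.XS f, rkS f x = rkS f y → x = y
  C_own : ∀ f Y, N.C f Y ⊆ N.own f Y
  terminal_accepts : ∀ f, N.Terminal f → ∀ Y, N.C f Y = N.own f Y
  top_choice : ∀ f, ¬ N.Terminal f → ∀ Y : Finset X,
      IsTop (rkB f) (min (Y ∩ N.XB f).card (Y ∩ N.XS f).card)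
        (Y ∩ N.XB f) (N.C f Y ∩ N.XB f)
    ∧ IsTop (rkS f) (min (Y ∩ N.XB f).card (Y ∩ N.XS f).card)
        (Y ∩ N.XS f) (N.C f Y ∩ N.XS f)

/-- A flow network: a trading network with no self-loop contracts, flow-based choice
functions, and exactly two terminal agents. -/
instance (N : TradingNetwork F X) : DecidablePred N.Terminal := fun f =>
  decidable_of_iff (N.XB f = ∅ ∨ N.XS f = ∅) Iff.rfl

def IsFlowNetwork [Fintype F] (N : TradingNetwork F X) (rkB rkS : F → X → ℕ) : Prop :=
  (∀ x, N.sell x ≠ N.buy x) ∧ N.FlowBased rkB rkS ∧ Fintype.card {f // N.Terminal f} = 2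

/-- An outcome is acceptable (individually rational for every firm). -/
def Acceptable (N : TradingNetwork F X) (A : Finset X) : Prop :=
  ∀ f, N.C f (N.own f A) = N.own f A

/-- `B` is `(A,f)`-acceptable: `f` chooses all its contracts in `B` when offered `B` alongside `A`. -/
def AccAlongside (N : TradingNetwork F X) (A B : Finset X) (f : F) : Prop :=
  N.own f B ⊆ N.C f (N.own f A ∪ N.own f B)

/-- Firm `f` is involved in the contract set `B`. -/
def Involved (N : TradingNetwork F X) (B : Finset X) (f : F) : Prop := (N.own f B).Nonempty

/-- `Z` is a blocking set for the outcome `A`. -/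
def Blocks (N : TradingNetwork F X) (A Z : Finset X) : Prop :=
  Z.Nonempty ∧ Disjoint Z A ∧ ∀ f, N.Involved Z f → N.AccAlongside A Z f

/-- A stable outcome: acceptable and admitting no blocking set. -/
def Stable (N : TradingNetwork F X) (A : Finset X) : Prop :=
  N.Acceptable A ∧ ¬ ∃ Z, N.Blocks A Z

/-- A path: consecutive contracts, with all involved firms distinct. -/
def IsPath (N : TradingNetwork F X) (l : List X) : Prop :=
  ∃ h : l ≠ [], l.Chain' (fun x y => N.buy x = N.sell y) ∧
    (N.sell (l.head h) :: l.map N.buy).Nodup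

/-- A cycle: consecutive contracts with distinct sellers, returning to the start. -/
def IsCycle (N : TradingNetwork F X) (l : List X) : Prop :=
  ∃ h : l ≠ [], l.Chain' (fun x y => N.buy x = N.sell y) ∧
    (l.map N.sell).Nodup ∧ N.buy (l.getLast h) = N.sell (l.head h)

/-- `l` is a blocking path or blocking cycle for the outcome `A`. -/
def BlockingPathOrCycle (N : TradingNetwork F X) (A : Finset X) (l : List X) : Prop :=
  (N.IsPath l ∨ N.IsCycle l) ∧ Disjoint l.toFinset A ∧
    ∀ f, N.Involved l.toFinset f → N.AccAlongside A l.toFinset f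

/-- A path-or-cycle-stable outcome. -/
def PathOrCycleStable (N : TradingNetwork F X) (A : Finset X) : Prop :=
  N.Acceptable A ∧ ¬ ∃ l : List X, N.BlockingPathOrCycle A l

/-- Chosen upstream contracts of `f` when offered upstream contracts `Y` and downstream `Z`. -/
def CB (N : TradingNetwork F X) (f : F) (Y Z : Finset X) : Finset X :=
  N.C f ((Y ∩ N.XB f) ∪ (Z ∩ N.XS f)) ∩ N.XB f

/-- Chosen downstream contracts of `f` when offered downstream `Z` and upstream `Y`. -/
def CS (N : TradingNetwork F X) (f : F) (Z Y : Finset X) : Finset X :=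
  N.C f ((Y ∩ N.XB f) ∪ (Z ∩ N.XS f)) ∩ N.XS f

/-- Rejected upstream contracts. -/
def RB (N : TradingNetwork F X) (f : F) (Y Z : Finset X) : Finset X :=
  (Y ∩ N.XB f) \ N.CB f Y Z

/-- Rejected downstream contracts. -/
def RS (N : TradingNetwork F X) (f : F) (Z Y : Finset X) : Finset X :=
  (Z ∩ N.XS f) \ N.CS f Z Y

/-- Full substitutability (same-side substitutability and cross-side complementarity)
of the choice function of firm `f`. -/
def FullySubstitutableAt (N : TradingNetwork F X) (f : F) : Prop :=
  ∀ Y' Y Z' Z : Finset X, Y' ⊆ Y → Z' ⊆ Z →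
    N.RB f Y' Z ⊆ N.RB f Y Z ∧ N.RS f Z' Y ⊆ N.RS f Z Y ∧
    N.RB f Y Z ⊆ N.RB f Y Z' ∧ N.RS f Z Y ⊆ N.RS f Z Y'

/-- Full substitutability of all choice functions. -/
def FullySubstitutable (N : TradingNetwork F X) : Prop :=
  ∀ f, N.FullySubstitutableAt f

/-- The irrelevance of rejected contracts condition for the choice function of firm `f`. -/
def IRCAt (N : TradingNetwork F X) (f : F) : Prop :=
  ∀ Y Z : Finset X, N.C f Y ⊆ Z → Z ⊆ Y → N.C f Z = N.C f Y

/-- The irrelevance of rejected contracts condition. -/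
def IRC (N : TradingNetwork F X) : Prop := ∀ f, N.IRCAt f

end TradingNetwork

open TradingNetwork in
lemma isTop_unique {X : Type} [DecidableEq X] (r : X → ℕ) {k : ℕ} {W S T : Finset X}
    (hS : IsTop r k W S) (hT : IsTop r k W T) : S = T := by
  obtain ⟨hSW, hSc, hStop⟩ := hS
  obtain ⟨hTW, hTc, hTtop⟩ := hT
  apply Finset.eq_of_subset_of_card_le _ (by rw [hSc, hTc])
  intro x hx
  by_contra hxT
  have hcard : S.card = T.card := by rw [hSc, hTc]
  have hTS : (T \ S).Nonempty := by
    rw [← Finset.card_pos, ← Finset.card_sdiff_comm hcard]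
    exact Finset.card_pos.mpr ⟨x, Finset.mem_sdiff.mpr ⟨hx, hxT⟩⟩
  obtain ⟨t, ht⟩ := hTS
  rw [Finset.mem_sdiff] at ht
  have h1 := hStop x hx t (hTW ht.1) ht.2
  have h2 := hTtop t ht.1 x (hSW hx) hxT
  omega

open TradingNetwork in
/-- In a flow network, every firm's flow-based choice function satisfies
the irrelevance of rejected contracts condition. -/
theorem flowNetwork_IRC {F X : Type} [DecidableEq F] [DecidableEq X] [Fintype X] [Fintype F]
    (N : TradingNetwork F X) (rkB rkS : F → X → ℕ)
    (hN : N.IsFlowNetwork rkB rkS) :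
    N.IRC := by
  obtain ⟨hloop, hFB, hterm⟩ := hN
  intro f Y Z hCZ hZY
  by_cases ht : N.Terminal f
  · rw [hFB.terminal_accepts f ht, hFB.terminal_accepts f ht]
    have h1 : N.own f Y ⊆ Z := by
      rw [← hFB.terminal_accepts f ht]; exact hCZ
    apply Finset.Subset.antisymm
    · exact Finset.filter_subset_filter _ hZY
    · intro x hx
      have hxZ : x ∈ Z := h1 hx
      simp only [own, Finset.mem_filter] at hx ⊢
      exact ⟨hxZ, hx.2⟩
  · obtain ⟨hBY, hSY⟩ := hFB.top_choice f ht Y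
    obtain ⟨hBZ, hSZ⟩ := hFB.top_choice f ht Z
    set kY := min (Y ∩ N.XB f).card (Y ∩ N.XS f).card with hkY
    set kZ := min (Z ∩ N.XB f).card (Z ∩ N.XS f).card with hkZ
    have hCYB : N.C f Y ∩ N.XB f ⊆ Z ∩ N.XB f := fun x hx => by
      rw [Finset.mem_inter] at hx ⊢; exact ⟨hCZ hx.1, hx.2⟩
    have hCYS : N.C f Y ∩ N.XS f ⊆ Z ∩ N.XS f := fun x hx => by
      rw [Finset.mem_inter] at hx ⊢; exact ⟨hCZ hx.1, hx.2⟩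
    have hZB : Z ∩ N.XB f ⊆ Y ∩ N.XB f := Finset.inter_subset_inter hZY (Finset.Subset.refl _)
    have hZS : Z ∩ N.XS f ⊆ Y ∩ N.XS f := Finset.inter_subset_inter hZY (Finset.Subset.refl _)
    have h1 : kY ≤ (Z ∩ N.XB f).card :=
      le_trans (le_of_eq hBY.2.1.symm) (Finset.card_le_card hCYB)
    have h2 : kY ≤ (Z ∩ N.XS f).card :=
      le_trans (le_of_eq hSY.2.1.symm) (Finset.card_le_card hCYS)
    have hkZY : kZ = kY := by
      apply le_antisymm
      · exact le_min (le_trans (min_le_left _ _) (Finset.card_le_card hZB))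
          (le_trans (min_le_right _ _) (Finset.card_le_card hZS))
      · exact le_min h1 h2
    have hTopYB : IsTop (rkB f) kZ (Z ∩ N.XB f) (N.C f Y ∩ N.XB f) :=
      ⟨hCYB, hkZY ▸ hBY.2.1, fun x hx y hy hyn => hBY.2.2 x hx y (hZB hy) hyn⟩
    have hTopYS : IsTop (rkS f) kZ (Z ∩ N.XS f) (N.C f Y ∩ N.XS f) :=
      ⟨hCYS, hkZY ▸ hSY.2.1, fun x hx y hy hyn => hSY.2.2 x hx y (hZS hy) hyn⟩
    have eB : N.C f Z ∩ N.XB f = N.C f Y ∩ N.XB f := isTop_unique _ hBZ hTopYB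
    have eS : N.C f Z ∩ N.XS f = N.C f Y ∩ N.XS f := isTop_unique _ hSZ hTopYS
    have hdec : ∀ W : Finset X, N.C f W = (N.C f W ∩ N.XB f) ∪ (N.C f W ∩ N.XS f) := by
      intro W
      ext x
      simp only [Finset.mem_union, Finset.mem_inter, XB, XS, Finset.mem_filter,
        Finset.mem_univ, true_and]
      constructor
      · intro hx
        have h := hFB.C_own f W hx
        simp only [own, Finset.mem_filter] at h
        tauto
      · tauto
    rw [hdec Z, hdec Y, eB, eS]
end

section
/- Every flow-based choice function is fully substitutable: it satisfies same-side substitutability (for Y' ⊆ Y and Z' ⊆ Z: R_B^f(Y'|Z) ⊆ R_B^f(Y|Z) and R_S^f(Z'|Y) ⊆ R_S^f(Z|Y)) and cross-side complementarity (R_B^f(Y|Z) ⊆ R_B^f(Y|Z') and R_S^f(Z|Y) ⊆ R_S^f(Z|Y')). -/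
open Finset

namespace TradingNetwork

variable {F X : Type} [DecidableEq F] [DecidableEq X] [Fintype X]
variable {N : TradingNetwork F X} {rkB rkS : F → X → ℕ}

lemma isTop_notMem_iff {r : X → ℕ} {k : ℕ} {Y S : Finset X} (h : IsTop r k Y S)
    {x : X} (hx : x ∈ Y) :
    x ∉ S ↔ k ≤ (Y.filter fun y => r y < r x).card := by
  obtain ⟨hSY, hcard, hbest⟩ := h
  constructor
  · intro hxs
    have hsub : S ⊆ Y.filter fun y => r y < r x := fun t ht =>
      Finset.mem_filter.mpr ⟨hSY ht, hbest t ht x hx hxs⟩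
    simpa [hcard] using Finset.card_le_card hsub
  · intro hk hxS
    have hsub : (Y.filter fun y => r y < r x) ⊆ S.erase x := by
      intro y hy
      rw [Finset.mem_filter] at hy
      refine Finset.mem_erase.mpr ⟨fun hyx => by simp [hyx] at hy, ?_⟩
      by_contra hyS
      exact absurd (hbest x hxS y hy.1 hyS) (by omega)
    have h1 := Finset.card_le_card hsub
    rw [Finset.card_erase_of_mem hxS, hcard] at h1
    have h2 : 0 < k := hcard ▸ Finset.card_pos.mpr ⟨x, hxS⟩
    omega

lemma loop_chosen (hfb : N.FlowBased rkB rkS) {f : F} (hnt : ¬ N.Terminal f)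
    {W : Finset X} {l : X} (hlW : l ∈ W) (hlb : l ∈ N.XB f) (hls : l ∈ N.XS f) :
    l ∈ N.C f W := by
  by_contra hl
  have h1 := (hfb.top_choice f hnt W).1
  have h2 := (hfb.top_choice f hnt W).2
  have hlU : l ∈ W ∩ N.XB f := Finset.mem_inter.mpr ⟨hlW, hlb⟩
  have hlV : l ∈ W ∩ N.XS f := Finset.mem_inter.mpr ⟨hlW, hls⟩
  have hnb : l ∉ N.C f W ∩ N.XB f := fun h => hl (Finset.mem_inter.mp h).1
  have hns : l ∉ N.C f W ∩ N.XS f := fun h => hl (Finset.mem_inter.mp h).1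
  have c1 := (isTop_notMem_iff h1 hlU).mp hnb
  have c2 := (isTop_notMem_iff h2 hlV).mp hns
  have e1 : ((W ∩ N.XB f).filter fun y => rkB f y < rkB f l) ⊆ (W ∩ N.XB f).erase l := by
    intro y hy
    rw [Finset.mem_filter] at hy
    exact Finset.mem_erase.mpr ⟨fun hyl => by simp [hyl] at hy, hy.1⟩
  have e2 : ((W ∩ N.XS f).filter fun y => rkS f y < rkS f l) ⊆ (W ∩ N.XS f).erase l := by
    intro y hy
    rw [Finset.mem_filter] at hy
    exact Finset.mem_erase.mpr ⟨fun hyl => by simp [hyl] at hy, hy.1⟩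
  have f1 := le_trans c1 (Finset.card_le_card e1)
  have f2 := le_trans c2 (Finset.card_le_card e2)
  rw [Finset.card_erase_of_mem hlU] at f1
  rw [Finset.card_erase_of_mem hlV] at f2
  have g1 : 0 < (W ∩ N.XB f).card := Finset.card_pos.mpr ⟨l, hlU⟩
  have g2 : 0 < (W ∩ N.XS f).card := Finset.card_pos.mpr ⟨l, hlV⟩
  omega

lemma loop_lt_B (hfb : N.FlowBased rkB rkS) {f : F} (hnt : ¬ N.Terminal f)
    {l y : X} (hlb : l ∈ N.XB f) (hls : l ∈ N.XS f) (hyb : y ∈ N.XB f) (hys : y ∉ N.XS f) :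
    rkB f l < rkB f y := by
  have hne : l ≠ y := fun h => hys (h ▸ hls)
  have hWb : ({l, y} : Finset X) ∩ N.XB f = {l, y} := by
    rw [Finset.inter_eq_left]
    simp [Finset.insert_subset_iff, hlb, hyb]
  have hWs : ({l, y} : Finset X) ∩ N.XS f = {l} := by
    ext z
    simp only [Finset.mem_inter, Finset.mem_insert, Finset.mem_singleton]
    constructor
    · rintro ⟨hz | hz, hzs⟩
      · exact hz
      · exact absurd (hz ▸ hzs) hys
    · rintro rfl; exact ⟨Or.inl rfl, hls⟩
  have hk : min (({l, y} : Finset X) ∩ N.XB f).card (({l, y} : Finset X) ∩ N.XS f).card = 1 := by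
    rw [hWb, hWs, Finset.card_insert_of_notMem (by simp [hne])]
    simp
  have hTop := (hfb.top_choice f hnt {l, y}).1
  rw [hk, hWb] at hTop
  have hlC : l ∈ N.C f {l, y} := loop_chosen hfb hnt (by simp) hlb hls
  have hlT : l ∈ N.C f {l, y} ∩ N.XB f := Finset.mem_inter.mpr ⟨hlC, hlb⟩
  have hyT : y ∉ N.C f {l, y} ∩ N.XB f := by
    intro hyT
    have hsub : ({l, y} : Finset X) ⊆ N.C f {l, y} ∩ N.XB f :=
      Finset.insert_subset hlT (Finset.singleton_subset_iff.mpr hyT)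
    have := Finset.card_le_card hsub
    rw [hTop.2.1, Finset.card_insert_of_notMem (by simp [hne]), Finset.card_singleton] at this
    omega
  exact hTop.2.2 l hlT y (by simp) hyT

lemma loop_lt_S (hfb : N.FlowBased rkB rkS) {f : F} (hnt : ¬ N.Terminal f)
    {l y : X} (hlb : l ∈ N.XB f) (hls : l ∈ N.XS f) (hys : y ∈ N.XS f) (hyb : y ∉ N.XB f) :
    rkS f l < rkS f y := by
  have hne : l ≠ y := fun h => hyb (h ▸ hlb)
  have hWs : ({l, y} : Finset X) ∩ N.XS f = {l, y} := by
    rw [Finset.inter_eq_left]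
    simp [Finset.insert_subset_iff, hls, hys]
  have hWb : ({l, y} : Finset X) ∩ N.XB f = {l} := by
    ext z
    simp only [Finset.mem_inter, Finset.mem_insert, Finset.mem_singleton]
    constructor
    · rintro ⟨hz | hz, hzb⟩
      · exact hz
      · exact absurd (hz ▸ hzb) hyb
    · rintro rfl; exact ⟨Or.inl rfl, hlb⟩
  have hk : min (({l, y} : Finset X) ∩ N.XB f).card (({l, y} : Finset X) ∩ N.XS f).card = 1 := by
    rw [hWb, hWs, Finset.card_insert_of_notMem (by simp [hne])]
    simp
  have hTop := (hfb.top_choice f hnt {l, y}).2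
  rw [hk, hWs] at hTop
  have hlC : l ∈ N.C f {l, y} := loop_chosen hfb hnt (by simp) hlb hls
  have hlT : l ∈ N.C f {l, y} ∩ N.XS f := Finset.mem_inter.mpr ⟨hlC, hls⟩
  have hyT : y ∉ N.C f {l, y} ∩ N.XS f := by
    intro hyT
    have hsub : ({l, y} : Finset X) ⊆ N.C f {l, y} ∩ N.XS f :=
      Finset.insert_subset hlT (Finset.singleton_subset_iff.mpr hyT)
    have := Finset.card_le_card hsub
    rw [hTop.2.1, Finset.card_insert_of_notMem (by simp [hne]), Finset.card_singleton] at this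
    omega
  exact hTop.2.2 l hlT y (by simp) hyT

lemma mem_RB_iff (hfb : N.FlowBased rkB rkS) {f : F} (hnt : ¬ N.Terminal f) {Y Z : Finset X} {x : X} :
    x ∈ N.RB f Y Z ↔ x ∈ Y ∧ x ∈ N.XB f ∧
      min (((Y ∩ N.XB f) ∪ (Z ∩ N.XS f)) ∩ N.XB f).card
          (((Y ∩ N.XB f) ∪ (Z ∩ N.XS f)) ∩ N.XS f).card ≤
        ((((Y ∩ N.XB f) ∪ (Z ∩ N.XS f)) ∩ N.XB f).filter
          fun y => rkB f y < rkB f x).card := by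
  rw [RB, CB, Finset.mem_sdiff, Finset.mem_inter]
  constructor
  · rintro ⟨⟨hxY, hxb⟩, hns⟩
    refine ⟨hxY, hxb, ?_⟩
    have hxU : x ∈ ((Y ∩ N.XB f) ∪ (Z ∩ N.XS f)) ∩ N.XB f :=
      Finset.mem_inter.mpr ⟨Finset.mem_union_left _ (Finset.mem_inter.mpr ⟨hxY, hxb⟩), hxb⟩
    exact (isTop_notMem_iff (hfb.top_choice f hnt _).1 hxU).mp hns
  · rintro ⟨hxY, hxb, hk⟩
    refine ⟨⟨hxY, hxb⟩, ?_⟩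
    have hxU : x ∈ ((Y ∩ N.XB f) ∪ (Z ∩ N.XS f)) ∩ N.XB f :=
      Finset.mem_inter.mpr ⟨Finset.mem_union_left _ (Finset.mem_inter.mpr ⟨hxY, hxb⟩), hxb⟩
    exact (isTop_notMem_iff (hfb.top_choice f hnt _).1 hxU).mpr hk

lemma mem_RS_iff (hfb : N.FlowBased rkB rkS) {f : F} (hnt : ¬ N.Terminal f) {Z Y : Finset X} {x : X} :
    x ∈ N.RS f Z Y ↔ x ∈ Z ∧ x ∈ N.XS f ∧
      min (((Y ∩ N.XB f) ∪ (Z ∩ N.XS f)) ∩ N.XB f).card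
          (((Y ∩ N.XB f) ∪ (Z ∩ N.XS f)) ∩ N.XS f).card ≤
        ((((Y ∩ N.XB f) ∪ (Z ∩ N.XS f)) ∩ N.XS f).filter
          fun y => rkS f y < rkS f x).card := by
  rw [RS, CS, Finset.mem_sdiff, Finset.mem_inter]
  constructor
  · rintro ⟨⟨hxZ, hxs⟩, hns⟩
    refine ⟨hxZ, hxs, ?_⟩
    have hxV : x ∈ ((Y ∩ N.XB f) ∪ (Z ∩ N.XS f)) ∩ N.XS f :=
      Finset.mem_inter.mpr ⟨Finset.mem_union_right _ (Finset.mem_inter.mpr ⟨hxZ, hxs⟩), hxs⟩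
    exact (isTop_notMem_iff (hfb.top_choice f hnt _).2 hxV).mp hns
  · rintro ⟨hxZ, hxs, hk⟩
    refine ⟨⟨hxZ, hxs⟩, ?_⟩
    have hxV : x ∈ ((Y ∩ N.XB f) ∪ (Z ∩ N.XS f)) ∩ N.XS f :=
      Finset.mem_inter.mpr ⟨Finset.mem_union_right _ (Finset.mem_inter.mpr ⟨hxZ, hxs⟩), hxs⟩
    exact (isTop_notMem_iff (hfb.top_choice f hnt _).2 hxV).mpr hk

lemma RB_notMem_XS (hfb : N.FlowBased rkB rkS) {f : F} (hnt : ¬ N.Terminal f)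
    {Y Z : Finset X} {x : X} (hx : x ∈ N.RB f Y Z) : x ∉ N.XS f := by
  intro hxs
  rw [RB, Finset.mem_sdiff] at hx
  obtain ⟨hx1, hx2⟩ := hx
  rw [Finset.mem_inter] at hx1
  exact hx2 (Finset.mem_inter.mpr
    ⟨loop_chosen hfb hnt (Finset.mem_union_left _ (Finset.mem_inter.mpr hx1)) hx1.2 hxs, hx1.2⟩)

lemma RS_notMem_XB (hfb : N.FlowBased rkB rkS) {f : F} (hnt : ¬ N.Terminal f)
    {Z Y : Finset X} {x : X} (hx : x ∈ N.RS f Z Y) : x ∉ N.XB f := by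
  intro hxb
  rw [RS, Finset.mem_sdiff] at hx
  obtain ⟨hx1, hx2⟩ := hx
  rw [Finset.mem_inter] at hx1
  exact hx2 (Finset.mem_inter.mpr
    ⟨loop_chosen hfb hnt (Finset.mem_union_right _ (Finset.mem_inter.mpr hx1)) hxb hx1.2, hx1.2⟩)

lemma RB_mono_same (hfb : N.FlowBased rkB rkS) {f : F} (hnt : ¬ N.Terminal f)
    {Y' Y Z : Finset X} (hY : Y' ⊆ Y) : N.RB f Y' Z ⊆ N.RB f Y Z := by
  intro x hx
  have hxs : x ∉ N.XS f := RB_notMem_XS hfb hnt hx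
  rw [mem_RB_iff hfb hnt] at hx ⊢
  obtain ⟨hxY, hxb, hk⟩ := hx
  refine ⟨hY hxY, hxb, ?_⟩
  set b := N.XB f
  set s := N.XS f
  set U' := ((Y' ∩ b) ∪ (Z ∩ s)) ∩ b with hU'
  set V' := ((Y' ∩ b) ∪ (Z ∩ s)) ∩ s with hV'
  set U := ((Y ∩ b) ∪ (Z ∩ s)) ∩ b with hU
  set V := ((Y ∩ b) ∪ (Z ∩ s)) ∩ s with hV
  have hU'U : U' ⊆ U := by
    intro y hy
    simp only [hU', hU, Finset.mem_inter, Finset.mem_union] at hy ⊢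
    rcases hy with ⟨h1 | h2, hb⟩
    · exact ⟨Or.inl ⟨hY h1.1, h1.2⟩, hb⟩
    · exact ⟨Or.inr h2, hb⟩
  have hV'V : V' ⊆ V := by
    intro y hy
    simp only [hV', hV, Finset.mem_inter, Finset.mem_union] at hy ⊢
    rcases hy with ⟨h1 | h2, hs2⟩
    · exact ⟨Or.inl ⟨hY h1.1, h1.2⟩, hs2⟩
    · exact ⟨Or.inr h2, hs2⟩
  have hfsub : U'.filter (fun y => rkB f y < rkB f x) ⊆ U.filter (fun y => rkB f y < rkB f x) :=
    Finset.filter_subset_filter _ hU'U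
  have hxU' : x ∈ U' := by
    simp only [hU', Finset.mem_inter, Finset.mem_union]
    exact ⟨Or.inl ⟨hxY, hxb⟩, hxb⟩
  have hm'lt : (U'.filter (fun y => rkB f y < rkB f x)).card < U'.card := by
    refine Finset.card_lt_card ⟨Finset.filter_subset _ _, fun hall => ?_⟩
    have := Finset.mem_filter.mp (hall hxU')
    simp at this
  have hsd : (V \ V') ⊆ U.filter (fun y => rkB f y < rkB f x) := by
    intro y hy
    rw [Finset.mem_sdiff] at hy
    obtain ⟨hyV, hyV'⟩ := hy
    simp only [hV, Finset.mem_inter, Finset.mem_union] at hyV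
    simp only [hV', Finset.mem_inter, Finset.mem_union] at hyV'
    obtain ⟨hor, hys2⟩ := hyV
    rcases hor with h1 | h2
    · have hyb : y ∈ b := h1.2
      have hpy : rkB f y < rkB f x := loop_lt_B hfb hnt hyb hys2 hxb hxs
      refine Finset.mem_filter.mpr ⟨?_, hpy⟩
      simp only [hU, Finset.mem_inter, Finset.mem_union]
      exact ⟨Or.inl h1, hyb⟩
    · exact absurd ⟨Or.inr h2, hys2⟩ hyV'
  have hdisj : Disjoint (U'.filter (fun y => rkB f y < rkB f x)) (V \ V') := by
    rw [Finset.disjoint_left]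
    intro y hy1 hy2
    have hyU' := Finset.mem_of_mem_filter y hy1
    rw [Finset.mem_sdiff] at hy2
    obtain ⟨hyV, hyV'⟩ := hy2
    simp only [hU', Finset.mem_inter, Finset.mem_union] at hyU'
    simp only [hV, Finset.mem_inter, Finset.mem_union] at hyV
    apply hyV'
    simp only [hV', Finset.mem_inter, Finset.mem_union]
    rcases hyU'.1 with h1 | h2
    · exact ⟨Or.inl ⟨h1.1, h1.2⟩, hyV.2⟩
    · exact ⟨Or.inr h2, hyV.2⟩
  have hc1 : (U'.filter (fun y => rkB f y < rkB f x)).card + (V \ V').card ≤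
      (U.filter (fun y => rkB f y < rkB f x)).card := by
    rw [← Finset.card_union_of_disjoint hdisj]
    exact Finset.card_le_card (Finset.union_subset hfsub hsd)
  have hc2 : (V \ V').card + V'.card = V.card := Finset.card_sdiff_add_card_eq_card hV'V
  omega

lemma RB_cross (hfb : N.FlowBased rkB rkS) {f : F} (hnt : ¬ N.Terminal f)
    {Y Z' Z : Finset X} (hZ : Z' ⊆ Z) : N.RB f Y Z ⊆ N.RB f Y Z' := by
  intro x hx
  have hxs : x ∉ N.XS f := RB_notMem_XS hfb hnt hx
  rw [mem_RB_iff hfb hnt] at hx ⊢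
  obtain ⟨hxY, hxb, hk⟩ := hx
  refine ⟨hxY, hxb, ?_⟩
  set b := N.XB f
  set s := N.XS f
  set U'' := ((Y ∩ b) ∪ (Z' ∩ s)) ∩ b with hU''
  set V'' := ((Y ∩ b) ∪ (Z' ∩ s)) ∩ s with hV''
  set U := ((Y ∩ b) ∪ (Z ∩ s)) ∩ b with hU
  set V := ((Y ∩ b) ∪ (Z ∩ s)) ∩ s with hV
  have hUU : U'' ⊆ U := by
    intro y hy
    simp only [hU'', hU, Finset.mem_inter, Finset.mem_union] at hy ⊢
    rcases hy with ⟨h1 | h2, hb⟩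
    · exact ⟨Or.inl h1, hb⟩
    · exact ⟨Or.inr ⟨hZ h2.1, h2.2⟩, hb⟩
  have hVV : V'' ⊆ V := by
    intro y hy
    simp only [hV'', hV, Finset.mem_inter, Finset.mem_union] at hy ⊢
    rcases hy with ⟨h1 | h2, hs2⟩
    · exact ⟨Or.inl h1, hs2⟩
    · exact ⟨Or.inr ⟨hZ h2.1, h2.2⟩, hs2⟩
  have hQprop : ∀ y ∈ U \ U'', y ∈ Z ∧ y ∈ s ∧ y ∈ b ∧ y ∉ Y ∧ y ∉ Z' := by
    intro y hy
    rw [Finset.mem_sdiff] at hy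
    obtain ⟨hyU, hyU'⟩ := hy
    simp only [hU, Finset.mem_inter, Finset.mem_union] at hyU
    simp only [hU'', Finset.mem_inter, Finset.mem_union] at hyU'
    obtain ⟨hor, hyb⟩ := hyU
    rcases hor with h1 | h2
    · exact absurd ⟨Or.inl h1, hyb⟩ hyU'
    · exact ⟨h2.1, h2.2, hyb, fun hyY => hyU' ⟨Or.inl ⟨hyY, hyb⟩, hyb⟩,
        fun hyZ' => hyU' ⟨Or.inr ⟨hyZ', h2.2⟩, hyb⟩⟩
  have hQsub : (U \ U'') ⊆ U.filter (fun y => rkB f y < rkB f x) := by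
    intro y hy
    obtain ⟨hyZ, hys2, hyb, _, _⟩ := hQprop y hy
    exact Finset.mem_filter.mpr ⟨(Finset.mem_sdiff.mp hy).1,
      loop_lt_B hfb hnt hyb hys2 hxb hxs⟩
  have hmsub : U.filter (fun y => rkB f y < rkB f x) ⊆
      (U''.filter (fun y => rkB f y < rkB f x)) ∪ (U \ U'') := by
    intro y hy
    by_cases hyU'' : y ∈ U''
    · exact Finset.mem_union_left _ (Finset.mem_filter.mpr ⟨hyU'', (Finset.mem_filter.mp hy).2⟩)
    · exact Finset.mem_union_right _ (Finset.mem_sdiff.mpr ⟨Finset.mem_of_mem_filter y hy, hyU''⟩)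
  have hc4 : (U.filter (fun y => rkB f y < rkB f x)).card ≤
      (U''.filter (fun y => rkB f y < rkB f x)).card + (U \ U'').card :=
    le_trans (Finset.card_le_card hmsub) (Finset.card_union_le _ _)
  have hQV : (U \ U'') ⊆ V \ V'' := by
    intro y hy
    obtain ⟨hyZ, hys2, hyb, hynY, hynZ'⟩ := hQprop y hy
    rw [Finset.mem_sdiff]
    constructor
    · simp only [hV, Finset.mem_inter, Finset.mem_union]
      exact ⟨Or.inr ⟨hyZ, hys2⟩, hys2⟩
    · simp only [hV'', Finset.mem_inter, Finset.mem_union]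
      rintro ⟨h1 | h2, -⟩
      · exact hynY h1.1
      · exact hynZ' h2.1
  have hc1 : (U \ U'').card + U''.card = U.card := Finset.card_sdiff_add_card_eq_card hUU
  have hc2 : (U \ U'').card ≤ (V \ V'').card := Finset.card_le_card hQV
  have hc3 : (V \ V'').card + V''.card = V.card := Finset.card_sdiff_add_card_eq_card hVV
  omega

lemma RS_mono_same (hfb : N.FlowBased rkB rkS) {f : F} (hnt : ¬ N.Terminal f)
    {Z' Z Y : Finset X} (hZ : Z' ⊆ Z) : N.RS f Z' Y ⊆ N.RS f Z Y := by
  intro x hx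
  have hxb : x ∉ N.XB f := RS_notMem_XB hfb hnt hx
  rw [mem_RS_iff hfb hnt] at hx ⊢
  obtain ⟨hxZ, hxs, hk⟩ := hx
  refine ⟨hZ hxZ, hxs, ?_⟩
  set b := N.XB f
  set s := N.XS f
  set U' := ((Y ∩ b) ∪ (Z' ∩ s)) ∩ b with hU'
  set V' := ((Y ∩ b) ∪ (Z' ∩ s)) ∩ s with hV'
  set U := ((Y ∩ b) ∪ (Z ∩ s)) ∩ b with hU
  set V := ((Y ∩ b) ∪ (Z ∩ s)) ∩ s with hV
  have hU'U : U' ⊆ U := by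
    intro y hy
    simp only [hU', hU, Finset.mem_inter, Finset.mem_union] at hy ⊢
    rcases hy with ⟨h1 | h2, hb2⟩
    · exact ⟨Or.inl h1, hb2⟩
    · exact ⟨Or.inr ⟨hZ h2.1, h2.2⟩, hb2⟩
  have hV'V : V' ⊆ V := by
    intro y hy
    simp only [hV', hV, Finset.mem_inter, Finset.mem_union] at hy ⊢
    rcases hy with ⟨h1 | h2, hs2⟩
    · exact ⟨Or.inl h1, hs2⟩
    · exact ⟨Or.inr ⟨hZ h2.1, h2.2⟩, hs2⟩
  have hfsub : V'.filter (fun y => rkS f y < rkS f x) ⊆ V.filter (fun y => rkS f y < rkS f x) :=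
    Finset.filter_subset_filter _ hV'V
  have hxV' : x ∈ V' := by
    simp only [hV', Finset.mem_inter, Finset.mem_union]
    exact ⟨Or.inr ⟨hxZ, hxs⟩, hxs⟩
  have hm'lt : (V'.filter (fun y => rkS f y < rkS f x)).card < V'.card := by
    refine Finset.card_lt_card ⟨Finset.filter_subset _ _, fun hall => ?_⟩
    have := Finset.mem_filter.mp (hall hxV')
    simp at this
  have hsd : (U \ U') ⊆ V.filter (fun y => rkS f y < rkS f x) := by
    intro y hy
    rw [Finset.mem_sdiff] at hy
    obtain ⟨hyU, hyU'⟩ := hy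
    simp only [hU, Finset.mem_inter, Finset.mem_union] at hyU
    simp only [hU', Finset.mem_inter, Finset.mem_union] at hyU'
    obtain ⟨hor, hyb⟩ := hyU
    rcases hor with h1 | h2
    · exact absurd ⟨Or.inl h1, hyb⟩ hyU'
    · have hpy : rkS f y < rkS f x := loop_lt_S hfb hnt hyb h2.2 hxs hxb
      refine Finset.mem_filter.mpr ⟨?_, hpy⟩
      simp only [hV, Finset.mem_inter, Finset.mem_union]
      exact ⟨Or.inr h2, h2.2⟩
  have hdisj : Disjoint (V'.filter (fun y => rkS f y < rkS f x)) (U \ U') := by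
    rw [Finset.disjoint_left]
    intro y hy1 hy2
    have hyV' := Finset.mem_of_mem_filter y hy1
    rw [Finset.mem_sdiff] at hy2
    obtain ⟨hyU, hyU'⟩ := hy2
    simp only [hU, Finset.mem_inter, Finset.mem_union] at hyU
    simp only [hV', Finset.mem_inter, Finset.mem_union] at hyV'
    apply hyU'
    simp only [hU', Finset.mem_inter, Finset.mem_union]
    rcases hyV'.1 with h1 | h2
    · exact ⟨Or.inl h1, hyU.2⟩
    · exact ⟨Or.inr h2, hyU.2⟩
  have hc1 : (V'.filter (fun y => rkS f y < rkS f x)).card + (U \ U').card ≤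
      (V.filter (fun y => rkS f y < rkS f x)).card := by
    rw [← Finset.card_union_of_disjoint hdisj]
    exact Finset.card_le_card (Finset.union_subset hfsub hsd)
  have hc2 : (U \ U').card + U'.card = U.card := Finset.card_sdiff_add_card_eq_card hU'U
  omega

lemma RS_cross (hfb : N.FlowBased rkB rkS) {f : F} (hnt : ¬ N.Terminal f)
    {Z Y' Y : Finset X} (hY : Y' ⊆ Y) : N.RS f Z Y ⊆ N.RS f Z Y' := by
  intro x hx
  have hxb : x ∉ N.XB f := RS_notMem_XB hfb hnt hx
  rw [mem_RS_iff hfb hnt] at hx ⊢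
  obtain ⟨hxZ, hxs, hk⟩ := hx
  refine ⟨hxZ, hxs, ?_⟩
  set b := N.XB f
  set s := N.XS f
  set U'' := ((Y' ∩ b) ∪ (Z ∩ s)) ∩ b with hU''
  set V'' := ((Y' ∩ b) ∪ (Z ∩ s)) ∩ s with hV''
  set U := ((Y ∩ b) ∪ (Z ∩ s)) ∩ b with hU
  set V := ((Y ∩ b) ∪ (Z ∩ s)) ∩ s with hV
  have hUU : U'' ⊆ U := by
    intro y hy
    simp only [hU'', hU, Finset.mem_inter, Finset.mem_union] at hy ⊢
    rcases hy with ⟨h1 | h2, hb2⟩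
    · exact ⟨Or.inl ⟨hY h1.1, h1.2⟩, hb2⟩
    · exact ⟨Or.inr h2, hb2⟩
  have hVV : V'' ⊆ V := by
    intro y hy
    simp only [hV'', hV, Finset.mem_inter, Finset.mem_union] at hy ⊢
    rcases hy with ⟨h1 | h2, hs2⟩
    · exact ⟨Or.inl ⟨hY h1.1, h1.2⟩, hs2⟩
    · exact ⟨Or.inr h2, hs2⟩
  have hQprop : ∀ y ∈ V \ V'', y ∈ Y ∧ y ∈ b ∧ y ∈ s ∧ y ∉ Y' ∧ y ∉ Z := by
    intro y hy
    rw [Finset.mem_sdiff] at hy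
    obtain ⟨hyV, hyV'⟩ := hy
    simp only [hV, Finset.mem_inter, Finset.mem_union] at hyV
    simp only [hV'', Finset.mem_inter, Finset.mem_union] at hyV'
    obtain ⟨hor, hys2⟩ := hyV
    rcases hor with h1 | h2
    · exact ⟨h1.1, h1.2, hys2, fun hyY' => hyV' ⟨Or.inl ⟨hyY', h1.2⟩, hys2⟩,
        fun hyZ => hyV' ⟨Or.inr ⟨hyZ, hys2⟩, hys2⟩⟩
    · exact absurd ⟨Or.inr h2, hys2⟩ hyV'
  have hmsub : V.filter (fun y => rkS f y < rkS f x) ⊆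
      (V''.filter (fun y => rkS f y < rkS f x)) ∪ (V \ V'') := by
    intro y hy
    by_cases hyV'' : y ∈ V''
    · exact Finset.mem_union_left _ (Finset.mem_filter.mpr ⟨hyV'', (Finset.mem_filter.mp hy).2⟩)
    · exact Finset.mem_union_right _ (Finset.mem_sdiff.mpr ⟨Finset.mem_of_mem_filter y hy, hyV''⟩)
  have hc4 : (V.filter (fun y => rkS f y < rkS f x)).card ≤
      (V''.filter (fun y => rkS f y < rkS f x)).card + (V \ V'').card :=
    le_trans (Finset.card_le_card hmsub) (Finset.card_union_le _ _)
  have hQU : (V \ V'') ⊆ U \ U'' := by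
    intro y hy
    obtain ⟨hyY, hyb, hys2, hynY', hynZ⟩ := hQprop y hy
    rw [Finset.mem_sdiff]
    constructor
    · simp only [hU, Finset.mem_inter, Finset.mem_union]
      exact ⟨Or.inl ⟨hyY, hyb⟩, hyb⟩
    · simp only [hU'', Finset.mem_inter, Finset.mem_union]
      rintro ⟨h1 | h2, -⟩
      · exact hynY' h1.1
      · exact hynZ h2.1
  have hc1 : (V \ V'').card + V''.card = V.card := Finset.card_sdiff_add_card_eq_card hVV
  have hc2 : (V \ V'').card ≤ (U \ U'').card := Finset.card_le_card hQU
  have hc3 : (U \ U'').card + U''.card = U.card := Finset.card_sdiff_add_card_eq_card hUU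
  omega

lemma mem_XB_iff {f : F} {x : X} : x ∈ N.XB f ↔ N.buy x = f := by
  simp [XB]

lemma mem_XS_iff {f : F} {x : X} : x ∈ N.XS f ↔ N.sell x = f := by
  simp [XS]

lemma RB_terminal (hfb : N.FlowBased rkB rkS) {f : F} (ht : N.Terminal f)
    {Y Z : Finset X} : N.RB f Y Z = ∅ := by
  rw [Finset.eq_empty_iff_forall_notMem]
  intro x hx
  rw [RB, Finset.mem_sdiff] at hx
  obtain ⟨hx1, hx2⟩ := hx
  rw [Finset.mem_inter] at hx1
  apply hx2
  rw [CB, hfb.terminal_accepts f ht]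
  refine Finset.mem_inter.mpr ⟨?_, hx1.2⟩
  rw [own, Finset.mem_filter]
  exact ⟨Finset.mem_union_left _ (Finset.mem_inter.mpr hx1), Or.inr (mem_XB_iff.mp hx1.2)⟩

lemma RS_terminal (hfb : N.FlowBased rkB rkS) {f : F} (ht : N.Terminal f)
    {Z Y : Finset X} : N.RS f Z Y = ∅ := by
  rw [Finset.eq_empty_iff_forall_notMem]
  intro x hx
  rw [RS, Finset.mem_sdiff] at hx
  obtain ⟨hx1, hx2⟩ := hx
  rw [Finset.mem_inter] at hx1
  apply hx2
  rw [CS, hfb.terminal_accepts f ht]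
  refine Finset.mem_inter.mpr ⟨?_, hx1.2⟩
  rw [own, Finset.mem_filter]
  exact ⟨Finset.mem_union_right _ (Finset.mem_inter.mpr hx1), Or.inl (mem_XS_iff.mp hx1.2)⟩

end TradingNetwork

open TradingNetwork in
/-- Every flow-based choice function is fully substitutable:
same-side substitutability and cross-side complementarity hold for every firm. -/
theorem flowBased_fullySubstitutable {F X : Type} [DecidableEq F] [DecidableEq X] [Fintype X]
    (N : TradingNetwork F X) (rkB rkS : F → X → ℕ)
    (hfb : N.FlowBased rkB rkS) :
    N.FullySubstitutable := by
  intro f Y' Y Z' Z hY hZ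
  by_cases ht : N.Terminal f
  · refine ⟨?_, ?_, ?_, ?_⟩ <;>
      simp [RB_terminal hfb ht, RS_terminal hfb ht]
  · exact ⟨RB_mono_same hfb ht hY, RS_mono_same hfb ht hZ,
      RB_cross hfb ht hZ, RS_cross hfb ht hY⟩
end

section
/- In a flow network, an outcome is path-or-cycle-stable if and only if it is stable. -/
open Finset

set_option linter.unusedSectionVars false
namespace FlowProof
open TradingNetwork Finset List

variable {F X : Type} [DecidableEq F] [DecidableEq X] [Fintype X] [Fintype F]
variable {N : TradingNetwork F X} {rkB rkS : F → X → ℕ}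

/-! ### Basic membership lemmas -/

lemma mem_XB {f : F} {x : X} : x ∈ N.XB f ↔ N.buy x = f := by
  simp [TradingNetwork.XB]

lemma mem_XS {f : F} {x : X} : x ∈ N.XS f ↔ N.sell x = f := by
  simp [TradingNetwork.XS]

lemma mem_own {f : F} {Y : Finset X} {x : X} :
    x ∈ N.own f Y ↔ x ∈ Y ∧ (N.sell x = f ∨ N.buy x = f) := by
  simp [TradingNetwork.own]

lemma own_inter_XB (f : F) (Y : Finset X) : N.own f Y ∩ N.XB f = Y ∩ N.XB f := by
  ext x; simp only [Finset.mem_inter, mem_own, mem_XB]; tauto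

lemma own_inter_XS (f : F) (Y : Finset X) : N.own f Y ∩ N.XS f = Y ∩ N.XS f := by
  ext x; simp only [Finset.mem_inter, mem_own, mem_XS]; tauto

lemma own_union (f : F) (Y Z : Finset X) : N.own f (Y ∪ Z) = N.own f Y ∪ N.own f Z :=
  Finset.filter_union _ _ _

lemma own_eq_union (f : F) (Y : Finset X) :
    N.own f Y = (Y ∩ N.XB f) ∪ (Y ∩ N.XS f) := by
  ext x
  simp only [mem_own, Finset.mem_union, Finset.mem_inter, mem_XB, mem_XS]
  tauto

lemma own_mono (f : F) {Y Z : Finset X} (h : Y ⊆ Z) : N.own f Y ⊆ N.own f Z :=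
  Finset.filter_subset_filter _ h

lemma own_own (f : F) (Y : Finset X) : N.own f (N.own f Y) = N.own f Y := by
  ext x; simp only [mem_own]; tauto

lemma own_singleton_buy (z : X) : N.own (N.buy z) {z} = {z} := by
  ext y
  simp only [mem_own, Finset.mem_singleton]
  constructor
  · exact fun h => h.1
  · rintro rfl; exact ⟨rfl, Or.inr rfl⟩

lemma own_singleton_sell (z : X) : N.own (N.sell z) {z} = {z} := by
  ext y
  simp only [mem_own, Finset.mem_singleton]
  constructor
  · exact fun h => h.1
  · rintro rfl; exact ⟨rfl, Or.inl rfl⟩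

/-! ### Flow-based choice lemmas -/

lemma isTop_mono {r : X → ℕ} {k : ℕ} {S1 S2 C1 C2 : Finset X} (h1 : IsTop r k S1 C1)
    (h2 : IsTop r k S2 C2) (hS : S2 ⊆ S1) {x : X} (hx1 : x ∈ C1) (hx2 : x ∈ S2) : x ∈ C2 := by
  by_contra hx
  obtain ⟨hC1S, hC1c, hC1top⟩ := h1
  obtain ⟨hC2S, hC2c, hC2top⟩ := h2
  have hsub : ¬ (insert x C2 ⊆ C1) := by
    intro hsub
    have h := Finset.card_le_card hsub
    rw [Finset.card_insert_of_notMem hx, hC1c, hC2c] at h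
    omega
  obtain ⟨w, hw, hw1⟩ := Finset.not_subset.mp hsub
  have hwx : w ≠ x := fun h => hw1 (h ▸ hx1)
  have hwC2 : w ∈ C2 := (Finset.mem_insert.mp hw).resolve_left hwx
  have h1lt := hC1top x hx1 w (hS (hC2S hwC2)) hw1
  have h2lt := hC2top w hwC2 x hx2 hx
  omega

lemma balanced (hFB : N.FlowBased rkB rkS) {A : Finset X} (hA : N.Acceptable A) {f : F}
    (hf : ¬ N.Terminal f) : (A ∩ N.XB f).card = (A ∩ N.XS f).card := by
  have h := hFB.top_choice f hf (N.own f A)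
  rw [hA f, own_inter_XB, own_inter_XS] at h
  obtain ⟨⟨-, h1, -⟩, ⟨-, h2, -⟩⟩ := h
  omega

lemma accept_all (hFB : N.FlowBased rkB rkS) {f : F} {W : Finset X}
    (h : ¬ N.Terminal f → (W ∩ N.XB f).card = (W ∩ N.XS f).card) :
    N.C f (N.own f W) = N.own f W := by
  by_cases ht : N.Terminal f
  · rw [hFB.terminal_accepts f ht, own_own]
  · have htop := hFB.top_choice f ht (N.own f W)
    rw [own_inter_XB, own_inter_XS] at htop
    have hcard := h ht
    have e1 : N.C f (N.own f W) ∩ N.XB f = W ∩ N.XB f :=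
      Finset.eq_of_subset_of_card_le htop.1.1 (by rw [htop.1.2.1]; omega)
    have e2 : N.C f (N.own f W) ∩ N.XS f = W ∩ N.XS f :=
      Finset.eq_of_subset_of_card_le htop.2.1 (by rw [htop.2.2.1]; omega)
    refine subset_antisymm ((hFB.C_own f _).trans (subset_of_eq (own_own f W))) ?_
    intro x hx
    rw [own_eq_union] at hx
    rcases Finset.mem_union.mp hx with h' | h'
    · rw [← e1] at h'; exact (Finset.mem_inter.mp h').1
    · rw [← e2] at h'; exact (Finset.mem_inter.mp h').1

lemma card_union_inter {A L : Finset X} (hd : Disjoint L A) (S : Finset X) :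
    ((A ∪ L) ∩ S).card = (A ∩ S).card + (L ∩ S).card := by
  rw [Finset.union_inter_distrib_right]
  exact Finset.card_union_of_disjoint
    (Finset.disjoint_of_subset_left Finset.inter_subset_left
      (Finset.disjoint_of_subset_right Finset.inter_subset_left hd.symm))

lemma acc_of_card_eq (hFB : N.FlowBased rkB rkS) {A L : Finset X} {f : F}
    (h : ¬ N.Terminal f → ((A ∪ L) ∩ N.XB f).card = ((A ∪ L) ∩ N.XS f).card) :
    N.AccAlongside A L f := by
  show N.own f L ⊆ _
  rw [← own_union, accept_all hFB h]
  exact own_mono f Finset.subset_union_right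

lemma fwd_ext (hloop : ∀ x, N.sell x ≠ N.buy x) (hFB : N.FlowBased rkB rkS)
    {A Z : Finset X} (hA : N.Acceptable A) (hdisj : Disjoint Z A) {f : F}
    (hf : ¬ N.Terminal f) {z : X} (hz : N.buy z = f) (hzZ : z ∈ Z)
    (hacc : N.AccAlongside A Z f) (hrej : z ∉ N.C f (N.own f (A ∪ {z}))) :
    (Z ∩ N.XS f).Nonempty := by
  rw [Finset.nonempty_iff_ne_empty]
  intro hZS
  have hbal := balanced hFB hA hf
  have hzA : z ∉ A := fun h => Finset.disjoint_left.mp hdisj hzZ h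
  have hWS : (A ∪ Z) ∩ N.XS f = A ∩ N.XS f := by
    rw [Finset.union_inter_distrib_right, hZS, Finset.union_empty]
  have htopW := hFB.top_choice f hf (N.own f (A ∪ Z))
  rw [own_inter_XB, own_inter_XS, hWS] at htopW
  have hle : (A ∩ N.XB f).card ≤ ((A ∪ Z) ∩ N.XB f).card :=
    Finset.card_le_card (Finset.inter_subset_inter Finset.subset_union_left le_rfl)
  have hk : min ((A ∪ Z) ∩ N.XB f).card (A ∩ N.XS f).card = (A ∩ N.XB f).card := by omega
  rw [hk] at htopW
  have hVB : (A ∪ {z}) ∩ N.XB f = insert z (A ∩ N.XB f) := by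
    ext x
    simp only [Finset.mem_inter, Finset.mem_union, Finset.mem_singleton, Finset.mem_insert, mem_XB]
    constructor
    · rintro ⟨h1 | h1, h2⟩
      · exact Or.inr ⟨h1, h2⟩
      · exact Or.inl h1
    · rintro (rfl | ⟨h1, h2⟩)
      · exact ⟨Or.inr rfl, hz⟩
      · exact ⟨Or.inl h1, h2⟩
  have hVS : (A ∪ {z}) ∩ N.XS f = A ∩ N.XS f := by
    ext x
    simp only [Finset.mem_inter, Finset.mem_union, Finset.mem_singleton, mem_XS]
    constructor
    · rintro ⟨h1 | rfl, h2⟩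
      · exact ⟨h1, h2⟩
      · exact absurd (h2.trans hz.symm) (hloop x)
    · rintro ⟨h1, h2⟩; exact ⟨Or.inl h1, h2⟩
  have htopV := hFB.top_choice f hf (N.own f (A ∪ {z}))
  rw [own_inter_XB, own_inter_XS, hVB, hVS] at htopV
  have hkV : min (insert z (A ∩ N.XB f)).card (A ∩ N.XS f).card = (A ∩ N.XB f).card := by
    rw [Finset.card_insert_of_notMem (fun h => hzA (Finset.mem_inter.mp h).1)]
    omega
  rw [hkV] at htopV
  have hzC : z ∈ N.C f (N.own f (A ∪ Z)) ∩ N.XB f := by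
    refine Finset.mem_inter.mpr ⟨?_, mem_XB.mpr hz⟩
    have hm : z ∈ N.own f Z := mem_own.mpr ⟨hzZ, Or.inr hz⟩
    have h2 := hacc hm
    rwa [← own_union] at h2
  have hsub : insert z (A ∩ N.XB f) ⊆ (A ∪ Z) ∩ N.XB f := by
    refine Finset.insert_subset
      (Finset.mem_inter.mpr ⟨Finset.mem_union_right _ hzZ, mem_XB.mpr hz⟩) ?_
    exact Finset.inter_subset_inter Finset.subset_union_left le_rfl
  have hmem := isTop_mono htopW.1 htopV.1 hsub hzC (Finset.mem_insert_self _ _)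
  exact hrej (Finset.mem_inter.mp hmem).1

lemma bwd_ext (hloop : ∀ x, N.sell x ≠ N.buy x) (hFB : N.FlowBased rkB rkS)
    {A Z : Finset X} (hA : N.Acceptable A) (hdisj : Disjoint Z A) {f : F}
    (hf : ¬ N.Terminal f) {z : X} (hz : N.sell z = f) (hzZ : z ∈ Z)
    (hacc : N.AccAlongside A Z f) (hrej : z ∉ N.C f (N.own f (A ∪ {z}))) :
    (Z ∩ N.XB f).Nonempty := by
  rw [Finset.nonempty_iff_ne_empty]
  intro hZB
  have hbal := balanced hFB hA hf
  have hzA : z ∉ A := fun h => Finset.disjoint_left.mp hdisj hzZ h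
  have hWB : (A ∪ Z) ∩ N.XB f = A ∩ N.XB f := by
    rw [Finset.union_inter_distrib_right, hZB, Finset.union_empty]
  have htopW := hFB.top_choice f hf (N.own f (A ∪ Z))
  rw [own_inter_XB, own_inter_XS, hWB] at htopW
  have hle : (A ∩ N.XS f).card ≤ ((A ∪ Z) ∩ N.XS f).card :=
    Finset.card_le_card (Finset.inter_subset_inter Finset.subset_union_left le_rfl)
  have hk : min (A ∩ N.XB f).card ((A ∪ Z) ∩ N.XS f).card = (A ∩ N.XS f).card := by omega
  rw [hk] at htopW
  have hVS : (A ∪ {z}) ∩ N.XS f = insert z (A ∩ N.XS f) := by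
    ext x
    simp only [Finset.mem_inter, Finset.mem_union, Finset.mem_singleton, Finset.mem_insert, mem_XS]
    constructor
    · rintro ⟨h1 | h1, h2⟩
      · exact Or.inr ⟨h1, h2⟩
      · exact Or.inl h1
    · rintro (rfl | ⟨h1, h2⟩)
      · exact ⟨Or.inr rfl, hz⟩
      · exact ⟨Or.inl h1, h2⟩
  have hVB : (A ∪ {z}) ∩ N.XB f = A ∩ N.XB f := by
    ext x
    simp only [Finset.mem_inter, Finset.mem_union, Finset.mem_singleton, mem_XB]
    constructor
    · rintro ⟨h1 | rfl, h2⟩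
      · exact ⟨h1, h2⟩
      · exact absurd (hz.trans h2.symm) (hloop x)
    · rintro ⟨h1, h2⟩; exact ⟨Or.inl h1, h2⟩
  have htopV := hFB.top_choice f hf (N.own f (A ∪ {z}))
  rw [own_inter_XB, own_inter_XS, hVB, hVS] at htopV
  have hkV : min (A ∩ N.XB f).card (insert z (A ∩ N.XS f)).card = (A ∩ N.XS f).card := by
    rw [Finset.card_insert_of_notMem (fun h => hzA (Finset.mem_inter.mp h).1)]
    omega
  rw [hkV] at htopV
  have hzC : z ∈ N.C f (N.own f (A ∪ Z)) ∩ N.XS f := by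
    refine Finset.mem_inter.mpr ⟨?_, mem_XS.mpr hz⟩
    have hm : z ∈ N.own f Z := mem_own.mpr ⟨hzZ, Or.inl hz⟩
    have h2 := hacc hm
    rwa [← own_union] at h2
  have hsub : insert z (A ∩ N.XS f) ⊆ (A ∪ Z) ∩ N.XS f := by
    refine Finset.insert_subset
      (Finset.mem_inter.mpr ⟨Finset.mem_union_right _ hzZ, mem_XS.mpr hz⟩) ?_
    exact Finset.inter_subset_inter Finset.subset_union_left le_rfl
  have hmem := isTop_mono htopW.2 htopV.2 hsub hzC (Finset.mem_insert_self _ _)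
  exact hrej (Finset.mem_inter.mp hmem).1

/-! ### Chains of contracts -/

/-- The list of firms visited by a chain of contracts. -/
def vl (N : TradingNetwork F X) : List X → List F
  | [] => []
  | z :: t => N.sell z :: N.buy z :: t.map N.buy

lemma vl_eq (l : List X) (hne : l ≠ []) :
    vl N l = N.sell (l.head hne) :: l.map N.buy := by
  cases l with
  | nil => exact absurd rfl hne
  | cons z t => rfl

lemma vl_cons_of_chain {z : X} {t : List X}
    (hc : (z :: t).Chain' (fun x y => N.buy x = N.sell y)) (ht : t ≠ []) :
    vl N (z :: t) = N.sell z :: vl N t := by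
  cases t with
  | nil => exact absurd rfl ht
  | cons w t' =>
    have h := (List.isChain_cons_cons.mp hc).1
    simp [vl, h]

lemma vl_eq_append : ∀ (l : List X) (hne : l ≠ []),
    l.Chain' (fun x y => N.buy x = N.sell y) →
    vl N l = l.map N.sell ++ [N.buy (l.getLast hne)]
  | [z], _, _ => rfl
  | z :: w :: t, _, hc => by
    change List.IsChain _ _ at hc; rw [List.isChain_cons_cons] at hc
    have ih := vl_eq_append (w :: t) (by simp) hc.2
    have h1 : vl N (z :: w :: t) = N.sell z :: vl N (w :: t) := by
      simp [vl, hc.1]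
    rw [h1, ih]
    rw [List.getLast_cons (by simp : (w :: t) ≠ [])]
    rfl

lemma vl_append (l : List X) (hne : l ≠ []) (z' : X) :
    vl N (l ++ [z']) = vl N l ++ [N.buy z'] := by
  rw [vl_eq (l ++ [z']) (by simp), vl_eq l hne, List.map_append,
    List.head_append_of_ne_nil hne]
  rfl

lemma head_eq_of_prefix {p l : List X} (h : p <+: l) (hp : p ≠ []) (hl : l ≠ []) :
    p.head hp = l.head hl := by
  cases p with
  | nil => exact absurd rfl hp
  | cons a p' =>
    cases l with
    | nil => exact absurd rfl hl
    | cons b l' => exact (List.cons_prefix_cons.mp h).1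

lemma prefix_buy : ∀ (l : List X) (f : F), f ∈ l.map N.buy →
    ∃ (p : List X) (hp : p ≠ []), p <+: l ∧ N.buy (p.getLast hp) = f := by
  intro l
  induction l with
  | nil => simp
  | cons z t ih =>
    intro f hf
    by_cases hz : N.buy z = f
    · exact ⟨[z], by simp, ⟨t, rfl⟩, hz⟩
    · have hf' : f ∈ t.map N.buy := by
        rcases List.mem_cons.mp hf with h | h
        · exact absurd h.symm hz
        · exact h
      obtain ⟨p, hp, hpre, hlast⟩ := ih f hf'
      refine ⟨z :: p, by simp, List.cons_prefix_cons.mpr ⟨rfl, hpre⟩, ?_⟩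
      rw [List.getLast_cons hp]
      exact hlast

/-! ### Intersections of a chain with upstream/downstream contract sets -/

lemma inter_XB_singleton {l : List X} (hnd : (l.map N.buy).Nodup) {x : X} (hx : x ∈ l) :
    l.toFinset ∩ N.XB (N.buy x) = {x} := by
  ext y
  simp only [Finset.mem_inter, List.mem_toFinset, mem_XB, Finset.mem_singleton]
  constructor
  · rintro ⟨hy, he⟩
    exact List.inj_on_of_nodup_map hnd hy hx he
  · rintro rfl; exact ⟨hx, rfl⟩

lemma inter_XS_singleton {l : List X} (hnd : (l.map N.sell).Nodup) {x : X} (hx : x ∈ l) :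
    l.toFinset ∩ N.XS (N.sell x) = {x} := by
  ext y
  simp only [Finset.mem_inter, List.mem_toFinset, mem_XS, Finset.mem_singleton]
  constructor
  · rintro ⟨hy, he⟩
    exact List.inj_on_of_nodup_map hnd hy hx he
  · rintro rfl; exact ⟨hx, rfl⟩

lemma inter_XB_empty {l : List X} {f : F} (hf : f ∉ l.map N.buy) :
    l.toFinset ∩ N.XB f = ∅ := by
  ext y
  simp only [Finset.mem_inter, List.mem_toFinset, mem_XB, Finset.notMem_empty, iff_false,
    not_and]
  intro hy he
  exact hf (he ▸ List.mem_map_of_mem (f := N.buy) hy)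

lemma inter_XS_empty {l : List X} {f : F} (hf : f ∉ l.map N.sell) :
    l.toFinset ∩ N.XS f = ∅ := by
  ext y
  simp only [Finset.mem_inter, List.mem_toFinset, mem_XS, Finset.notMem_empty, iff_false,
    not_and]
  intro hy he
  exact hf (he ▸ List.mem_map_of_mem (f := N.sell) hy)

/-! ### Paths and cycles block -/

lemma path_blocks (hFB : N.FlowBased rkB rkS) {A Z : Finset X}
    (hA : N.Acceptable A) (hdisj : Disjoint Z A)
    {l : List X} (hne : l ≠ []) (hch : l.Chain' fun x y => N.buy x = N.sell y)
    (hnd : (vl N l).Nodup) (hsub : ∀ x ∈ l, x ∈ Z)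
    (hS : ¬ N.Terminal (N.sell (l.head hne)) →
      l.head hne ∈ N.C (N.sell (l.head hne)) (N.own (N.sell (l.head hne)) (A ∪ {l.head hne})))
    (hB : ¬ N.Terminal (N.buy (l.getLast hne)) →
      l.getLast hne ∈
        N.C (N.buy (l.getLast hne)) (N.own (N.buy (l.getLast hne)) (A ∪ {l.getLast hne}))) :
    N.BlockingPathOrCycle A l := by
  have hbnd : (l.map N.buy).Nodup := by
    have h := hnd
    rw [vl_eq l hne] at h
    exact h.of_cons
  have hsnd : (l.map N.sell).Nodup := by
    have h := hnd
    rw [vl_eq_append l hne hch] at h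
    exact (List.nodup_append.mp h).1
  have hdisjLA : Disjoint l.toFinset A :=
    Finset.disjoint_left.mpr fun _ hx =>
      Finset.disjoint_left.mp hdisj (hsub _ (List.mem_toFinset.mp hx))
  have hndp : (N.sell (l.head hne) :: l.map N.buy).Nodup := by
    rw [← vl_eq l hne]; exact hnd
  refine ⟨Or.inl ⟨hne, hch, hndp⟩, hdisjLA, ?_⟩
  intro f hinv
  by_cases ht : N.Terminal f
  · show N.own f l.toFinset ⊆ _
    rw [← own_union, hFB.terminal_accepts f ht, own_own]
    exact own_mono f Finset.subset_union_right
  by_cases hfb : f ∈ l.map N.buy <;> by_cases hfs : f ∈ l.map N.sell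
  · -- interior firm
    obtain ⟨x, hxl, hxf⟩ := List.mem_map.mp hfb
    obtain ⟨y, hyl, hyf⟩ := List.mem_map.mp hfs
    have e1 : l.toFinset ∩ N.XB f = {x} := hxf ▸ inter_XB_singleton hbnd hxl
    have e2 : l.toFinset ∩ N.XS f = {y} := hyf ▸ inter_XS_singleton hsnd hyl
    refine acc_of_card_eq hFB fun _ => ?_
    rw [card_union_inter hdisjLA, card_union_inter hdisjLA, e1, e2, balanced hFB hA ht,
      Finset.card_singleton, Finset.card_singleton]
  · -- buyer end
    have hfv : f ∈ l.map N.sell ++ [N.buy (l.getLast hne)] := by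
      rw [← vl_eq_append l hne hch, vl_eq l hne]
      exact List.mem_cons_of_mem _ hfb
    have hf_eq : f = N.buy (l.getLast hne) := by
      rcases List.mem_append.mp hfv with h | h
      · exact absurd h hfs
      · simpa using h
    subst hf_eq
    have e1 : l.toFinset ∩ N.XB (N.buy (l.getLast hne)) = {l.getLast hne} :=
      inter_XB_singleton hbnd (List.getLast_mem hne)
    have e2 : l.toFinset ∩ N.XS (N.buy (l.getLast hne)) = ∅ := inter_XS_empty hfs
    show N.own (N.buy (l.getLast hne)) l.toFinset ⊆ _
    rw [own_eq_union, e1, e2, Finset.union_empty, Finset.singleton_subset_iff,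
      ← own_singleton_buy (N := N) (l.getLast hne), ← own_union]
    exact hB ht
  · -- seller end
    have hfv : f ∈ N.sell (l.head hne) :: l.map N.buy := by
      rw [← vl_eq l hne, vl_eq_append l hne hch]
      exact List.mem_append_left _ hfs
    have hf_eq : f = N.sell (l.head hne) := (List.mem_cons.mp hfv).resolve_right hfb
    subst hf_eq
    have e1 : l.toFinset ∩ N.XB (N.sell (l.head hne)) = ∅ := inter_XB_empty hfb
    have e2 : l.toFinset ∩ N.XS (N.sell (l.head hne)) = {l.head hne} :=
      inter_XS_singleton hsnd (List.head_mem hne)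
    show N.own (N.sell (l.head hne)) l.toFinset ⊆ _
    rw [own_eq_union, e1, e2, Finset.empty_union, Finset.singleton_subset_iff,
      ← own_singleton_sell (N := N) (l.head hne), ← own_union]
    exact hS ht
  · -- not involved
    exfalso
    obtain ⟨x, hx⟩ := hinv
    rw [mem_own] at hx
    rcases hx.2 with h | h
    · exact hfs (h ▸ List.mem_map_of_mem (f := N.sell) (List.mem_toFinset.mp hx.1))
    · exact hfb (h ▸ List.mem_map_of_mem (f := N.buy) (List.mem_toFinset.mp hx.1))

lemma cycle_blocks (hFB : N.FlowBased rkB rkS) {A Z : Finset X}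
    (hA : N.Acceptable A) (hdisj : Disjoint Z A)
    {l : List X} (hne : l ≠ []) (hch : l.Chain' fun x y => N.buy x = N.sell y)
    (hsnd : (l.map N.sell).Nodup)
    (hclose : N.buy (l.getLast hne) = N.sell (l.head hne)) (hsub : ∀ x ∈ l, x ∈ Z) :
    N.BlockingPathOrCycle A l := by
  have heq1 : N.sell (l.head hne) :: l.map N.buy = l.map N.sell ++ [N.sell (l.head hne)] := by
    have h := (vl_eq l hne).symm.trans (vl_eq_append l hne hch)
    rw [hclose] at h
    exact h
  have hperm : (l.map N.buy).Perm (l.map N.sell) := by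
    have hp2 : (l.map N.sell ++ [N.sell (l.head hne)]).Perm
        (N.sell (l.head hne) :: l.map N.sell) := List.perm_append_singleton _ _
    have hp3 : (N.sell (l.head hne) :: l.map N.buy).Perm
        (N.sell (l.head hne) :: l.map N.sell) := heq1 ▸ hp2
    exact hp3.cons_inv
  have hbnd : (l.map N.buy).Nodup := hperm.nodup_iff.mpr hsnd
  have hdisjLA : Disjoint l.toFinset A :=
    Finset.disjoint_left.mpr fun _ hx =>
      Finset.disjoint_left.mp hdisj (hsub _ (List.mem_toFinset.mp hx))
  refine ⟨Or.inr ⟨hne, hch, hsnd, hclose⟩, hdisjLA, ?_⟩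
  intro f hinv
  by_cases ht : N.Terminal f
  · show N.own f l.toFinset ⊆ _
    rw [← own_union, hFB.terminal_accepts f ht, own_own]
    exact own_mono f Finset.subset_union_right
  have hfs : f ∈ l.map N.sell := by
    obtain ⟨x, hx⟩ := hinv
    rw [mem_own] at hx
    rcases hx.2 with h | h
    · exact h ▸ List.mem_map_of_mem (f := N.sell) (List.mem_toFinset.mp hx.1)
    · exact hperm.mem_iff.mp (h ▸ List.mem_map_of_mem (f := N.buy) (List.mem_toFinset.mp hx.1))
  have hfb : f ∈ l.map N.buy := hperm.mem_iff.mpr hfs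
  obtain ⟨x, hxl, hxf⟩ := List.mem_map.mp hfb
  obtain ⟨y, hyl, hyf⟩ := List.mem_map.mp hfs
  have e1 : l.toFinset ∩ N.XB f = {x} := hxf ▸ inter_XB_singleton hbnd hxl
  have e2 : l.toFinset ∩ N.XS f = {y} := hyf ▸ inter_XS_singleton hsnd hyl
  refine acc_of_card_eq hFB fun _ => ?_
  rw [card_union_inter hdisjLA, card_union_inter hdisjLA, e1, e2, balanced hFB hA ht,
    Finset.card_singleton, Finset.card_singleton]

/-! ### Closing a cycle when the chain revisits a firm -/

lemma cycle_of (hloop : ∀ x, N.sell x ≠ N.buy x) :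
    ∀ (l : List X) (hne : l ≠ []), l.Chain' (fun x y => N.buy x = N.sell y) →
    (vl N l).Nodup → ∀ z' : X, N.sell z' = N.buy (l.getLast hne) →
    N.buy z' ∈ vl N l →
    ∃ (c : List X) (hc : c ≠ []), c.Chain' (fun x y => N.buy x = N.sell y) ∧
      (c.map N.sell).Nodup ∧ N.buy (c.getLast hc) = N.sell (c.head hc) ∧
      ∀ x ∈ c, x ∈ l ∨ x = z' := by
  intro l
  induction l with
  | nil => intro hne; exact absurd rfl hne
  | cons z t ih =>
    intro hne hch hnd z' hz' hmem
    by_cases hhd : N.buy z' = N.sell z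
    · -- the whole chain closes into a cycle
      refine ⟨(z :: t) ++ [z'], by simp, ?_, ?_, ?_, ?_⟩
      · change List.IsChain _ _; rw [List.isChain_append]
        refine ⟨hch, List.isChain_singleton _, ?_⟩
        intro x hx y hy
        rw [List.getLast?_eq_getLast hne] at hx
        simp only [Option.mem_some_iff, List.head?_cons] at hx hy
        subst hx; subst hy
        exact hz'.symm
      · rw [List.map_append, List.map_singleton, hz', ← vl_eq_append (z :: t) hne hch]
        exact hnd
      · rw [List.getLast_append_singleton]
        exact hhd
      · intro x hx
        rcases List.mem_append.mp hx with h | h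
        · exact Or.inl h
        · exact Or.inr (by simpa using h)
    · -- recurse into the tail
      cases t with
      | nil =>
        exfalso
        have h1 : N.buy z' = N.buy z := by
          have : vl N [z] = [N.sell z, N.buy z] := rfl
          rw [this] at hmem
          rcases List.mem_cons.mp hmem with h | h
          · exact absurd h hhd
          · simpa using h
        have h2 : N.sell z' = N.buy z := by simpa using hz'
        exact hloop z' (h2.trans h1.symm)
      | cons w t' =>
        have hch' := List.isChain_cons_cons.mp hch
        have hvc : vl N (z :: w :: t') = N.sell z :: vl N (w :: t') :=
          vl_cons_of_chain hch (by simp)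
        have hnd' : (vl N (w :: t')).Nodup := by
          rw [hvc] at hnd; exact hnd.of_cons
        have hmem' : N.buy z' ∈ vl N (w :: t') := by
          rw [hvc] at hmem
          exact (List.mem_cons.mp hmem).resolve_left hhd
        have hz'' : N.sell z' = N.buy ((w :: t').getLast (by simp)) := by
          rw [hz', List.getLast_cons (by simp : (w :: t') ≠ [])]
        obtain ⟨c, hc, h1, h2, h3, h4⟩ := ih (by simp) hch'.2 hnd' z' hz'' hmem'
        exact ⟨c, hc, h1, h2, h3, fun x hx =>
          (h4 x hx).imp (fun h => List.mem_cons_of_mem _ h) id⟩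

/-! ### Greedy extension -/

lemma extend_fwd (hloop : ∀ x, N.sell x ≠ N.buy x) (hFB : N.FlowBased rkB rkS)
    {A Z : Finset X} (hA : N.Acceptable A) (hdisj : Disjoint Z A)
    (hZ : ∀ f, N.Involved Z f → N.AccAlongside A Z f) :
    ∀ (n : ℕ) (l : List X) (hne : l ≠ []),
      l.Chain' (fun x y => N.buy x = N.sell y) → (vl N l).Nodup → (∀ x ∈ l, x ∈ Z) →
      (¬ N.Terminal (N.sell (l.head hne)) →
        l.head hne ∈ N.C (N.sell (l.head hne)) (N.own (N.sell (l.head hne)) (A ∪ {l.head hne}))) →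
      Fintype.card F ≤ n + l.length →
      ∃ c, N.BlockingPathOrCycle A c := by
  intro n
  induction n with
  | zero =>
    intro l hne _ hnd _ _ hcard
    exfalso
    have h1 : (vl N l).length ≤ Fintype.card F := hnd.length_le_card
    have h2 : (vl N l).length = l.length + 1 := by
      rw [vl_eq l hne]; simp
    omega
  | succ n ih =>
    intro l hne hch hnd hsub hS hcard
    by_cases hB : ¬ N.Terminal (N.buy (l.getLast hne)) →
        l.getLast hne ∈
          N.C (N.buy (l.getLast hne)) (N.own (N.buy (l.getLast hne)) (A ∪ {l.getLast hne}))
    · exact ⟨l, path_blocks hFB hA hdisj hne hch hnd hsub hS hB⟩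
    · push_neg at hB
      obtain ⟨hterm, hrej⟩ := hB
      have hzZ : l.getLast hne ∈ Z := hsub _ (List.getLast_mem hne)
      have hacc : N.AccAlongside A Z (N.buy (l.getLast hne)) :=
        hZ _ ⟨l.getLast hne, mem_own.mpr ⟨hzZ, Or.inr rfl⟩⟩
      obtain ⟨z', hz'⟩ := fwd_ext hloop hFB hA hdisj hterm rfl hzZ hacc hrej
      rw [Finset.mem_inter] at hz'
      have hz'Z : z' ∈ Z := hz'.1
      have hz'sell : N.sell z' = N.buy (l.getLast hne) := mem_XS.mp hz'.2
      by_cases hmem : N.buy z' ∈ vl N l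
      · obtain ⟨c, hc, h1, h2, h3, h4⟩ := cycle_of hloop l hne hch hnd z' hz'sell hmem
        exact ⟨c, cycle_blocks hFB hA hdisj hc h1 h2 h3
          (fun x hx => (h4 x hx).elim (fun h => hsub x h) (fun h => h ▸ hz'Z))⟩
      · refine ih (l ++ [z']) (by simp) ?_ ?_ ?_ ?_ ?_
        · change List.IsChain _ _; rw [List.isChain_append]
          refine ⟨hch, List.isChain_singleton _, ?_⟩
          intro x hx y hy
          rw [List.getLast?_eq_getLast hne] at hx
          simp only [Option.mem_some_iff, List.head?_cons] at hx hy
          subst hx; subst hy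
          exact hz'sell.symm
        · rw [vl_append l hne z', List.nodup_append']
          exact ⟨hnd, by simp, fun a ha hb => hmem (List.mem_singleton.mp hb ▸ ha)⟩
        · intro x hx
          rcases List.mem_append.mp hx with h | h
          · exact hsub x h
          · exact List.mem_singleton.mp h ▸ hz'Z
        · intro hterm'
          rw [List.head_append_of_ne_nil hne] at hterm' ⊢
          exact hS hterm'
        · rw [List.length_append]
          simp only [List.length_singleton]
          omega

lemma extend_bwd (hloop : ∀ x, N.sell x ≠ N.buy x) (hFB : N.FlowBased rkB rkS)
    {A Z : Finset X} (hA : N.Acceptable A) (hdisj : Disjoint Z A)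
    (hZ : ∀ f, N.Involved Z f → N.AccAlongside A Z f) :
    ∀ (n : ℕ) (l : List X) (hne : l ≠ []),
      l.Chain' (fun x y => N.buy x = N.sell y) → (vl N l).Nodup → (∀ x ∈ l, x ∈ Z) →
      Fintype.card F ≤ n + l.length →
      ∃ c, N.BlockingPathOrCycle A c := by
  intro n
  induction n with
  | zero =>
    intro l hne _ hnd _ hcard
    exfalso
    have h1 : (vl N l).length ≤ Fintype.card F := hnd.length_le_card
    have h2 : (vl N l).length = l.length + 1 := by
      rw [vl_eq l hne]; simp
    omega
  | succ n ih =>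
    intro l hne hch hnd hsub hcard
    by_cases hS : ¬ N.Terminal (N.sell (l.head hne)) →
        l.head hne ∈ N.C (N.sell (l.head hne)) (N.own (N.sell (l.head hne)) (A ∪ {l.head hne}))
    · exact extend_fwd hloop hFB hA hdisj hZ (Fintype.card F) l hne hch hnd hsub hS
        (Nat.le_add_right _ _)
    · push_neg at hS
      obtain ⟨hterm, hrej⟩ := hS
      have hhZ : l.head hne ∈ Z := hsub _ (List.head_mem hne)
      have hacc : N.AccAlongside A Z (N.sell (l.head hne)) :=
        hZ _ ⟨l.head hne, mem_own.mpr ⟨hhZ, Or.inl rfl⟩⟩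
      obtain ⟨z', hz'⟩ := bwd_ext hloop hFB hA hdisj hterm rfl hhZ hacc hrej
      rw [Finset.mem_inter] at hz'
      have hz'Z : z' ∈ Z := hz'.1
      have hz'buy : N.buy z' = N.sell (l.head hne) := mem_XB.mp hz'.2
      by_cases hmem : N.sell z' ∈ vl N l
      · -- close a cycle through a prefix of `l`
        have hsne : N.sell z' ≠ N.sell (l.head hne) :=
          fun h => hloop z' (h.trans hz'buy.symm)
        have hmem' : N.sell z' ∈ l.map N.buy := by
          rw [vl_eq l hne] at hmem
          exact (List.mem_cons.mp hmem).resolve_left hsne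
        obtain ⟨p, hp, hpre, hlast⟩ := prefix_buy l _ hmem'
        have hchp : p.Chain' (fun x y => N.buy x = N.sell y) := hch.prefix hpre
        have hhead : p.head hp = l.head hne := head_eq_of_prefix hpre hp hne
        have hvp : (vl N p).Nodup := by
          have hsubl : vl N p <+: vl N l := by
            rw [vl_eq p hp, vl_eq l hne, hhead]
            exact List.cons_prefix_cons.mpr ⟨rfl, hpre.map N.buy⟩
          exact List.Nodup.sublist hsubl.sublist hnd
        refine ⟨z' :: p, cycle_blocks hFB hA hdisj (by simp) ?_ ?_ ?_ ?_⟩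
        · change List.IsChain _ _; rw [List.isChain_cons]
          refine ⟨fun y hy => ?_, hchp⟩
          rw [List.head?_eq_head hp] at hy
          rw [Option.mem_some_iff] at hy
          subst hy
          rw [hhead]
          exact hz'buy
        · have hv : vl N p = p.map N.sell ++ [N.buy (p.getLast hp)] := vl_eq_append p hp hchp
          have hperm : (p.map N.sell ++ [N.buy (p.getLast hp)]).Perm
              (N.buy (p.getLast hp) :: p.map N.sell) := List.perm_append_singleton _ _
          have hn2 : (N.buy (p.getLast hp) :: p.map N.sell).Nodup := hperm.nodup (hv ▸ hvp)
          rw [hlast] at hn2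
          simpa using hn2
        · show N.buy ((z' :: p).getLast (by simp)) = N.sell z'
          rw [List.getLast_cons hp]
          exact hlast
        · intro x hx
          rcases List.mem_cons.mp hx with rfl | h
          · exact hz'Z
          · exact hsub x (hpre.sublist.subset h)
      · -- prepend the new contract
        have hvcons : vl N (z' :: l) = N.sell z' :: vl N l :=
          vl_cons_of_chain (by
            change List.IsChain _ _; rw [List.isChain_cons]
            refine ⟨fun y hy => ?_, hch⟩
            rw [List.head?_eq_head hne] at hy
            rw [Option.mem_some_iff] at hy
            subst hy
            exact hz'buy) hne
        refine ih (z' :: l) (by simp) ?_ ?_ ?_ ?_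
        · change List.IsChain _ _; rw [List.isChain_cons]
          refine ⟨fun y hy => ?_, hch⟩
          rw [List.head?_eq_head hne] at hy
          rw [Option.mem_some_iff] at hy
          subst hy
          exact hz'buy
        · rw [hvcons]
          exact List.nodup_cons.mpr ⟨hmem, hnd⟩
        · intro x hx
          rcases List.mem_cons.mp hx with rfl | h
          · exact hz'Z
          · exact hsub x h
        · rw [List.length_cons]
          omega

end FlowProof


open TradingNetwork in
/-- In a flow network, an outcome is path-or-cycle-stable
if and only if it is stable. -/
theorem pathOrCycleStable_iff_stable {F X : Type} [DecidableEq F] [DecidableEq X] [Fintype X]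
    [Fintype F] (N : TradingNetwork F X) (rkB rkS : F → X → ℕ)
    (hN : N.IsFlowNetwork rkB rkS) (A : Finset X) :
    N.PathOrCycleStable A ↔ N.Stable A := by
  obtain ⟨hloop, hFB, -⟩ := hN
  constructor
  · rintro ⟨hAcc, hno⟩
    refine ⟨hAcc, ?_⟩
    rintro ⟨Z, hZne, hZdisj, hZacc⟩
    obtain ⟨z, hz⟩ := hZne
    have hnd : (FlowProof.vl N [z]).Nodup := by
      have h0 : FlowProof.vl N [z] = [N.sell z, N.buy z] := rfl
      rw [h0]
      simp [hloop z]
    obtain ⟨c, hc⟩ := FlowProof.extend_bwd hloop hFB hAcc hZdisj hZacc (Fintype.card F) [z]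
      (by simp) (List.isChain_singleton z) hnd (by simpa using hz) (Nat.le_add_right _ _)
    exact hno ⟨c, hc⟩
  · rintro ⟨hAcc, hno⟩
    refine ⟨hAcc, ?_⟩
    rintro ⟨l, hpc, hdisj, hacc⟩
    have hne : l ≠ [] := by
      rcases hpc with ⟨h, -⟩ | ⟨h, -⟩ <;> exact h
    exact hno ⟨l.toFinset, ⟨l.head hne, List.mem_toFinset.mpr (List.head_mem hne)⟩, hdisj, hacc⟩
end

section
/- In the gadget network built from a directed graph D = (V,E), if the vertices of D can be partitioned into two acyclic sets Q and R, then the outcome A consisting of, for each v ∈ Q, the contracts {s s_v, s_v b_v, b_v b'_v, b'_v t_v, t_v t} and, for each v ∈ R, the contracts {s s_v, s_v a_v, a_v a'_v, a'_v t_v, t_v t} admits no blocking path and no blocking cycle. -/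
open Finset

/-! ### The gadget network built from a directed graph -/

/-- The induced subgraph on the vertex set `U` contains a directed cycle. -/
def HasCycleIn {V : Type} [DecidableEq V] (adj : V → V → Bool) (U : Finset V) : Prop :=
  ∃ l : List V, ∃ h : l ≠ [], l.Nodup ∧ (∀ v ∈ l, v ∈ U) ∧
    l.Chain' (fun u v => adj u v = true) ∧ adj (l.getLast h) (l.head h) = true

/-- Firms of the gadget network: the two terminal firms `s = Sum.inl false` and
`t = Sum.inl true`, and for each vertex `v` the six firms
`s_v = (v,0)`, `a_v = (v,1)`, `a'_v = (v,2)`, `b_v = (v,3)`, `b'_v = (v,4)`, `t_v = (v,5)`. -/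
abbrev GFirm (V : Type) : Type := Bool ⊕ (V × Fin 6)

/-- Contracts of the gadget network: for each vertex `v` the eight contracts
`s s_v = (v,0)`, `s_v a_v = (v,1)`, `s_v b_v = (v,2)`, `a_v a'_v = (v,3)`, `b_v b'_v = (v,4)`,
`a'_v t_v = (v,5)`, `b'_v t_v = (v,6)`, `t_v t = (v,7)`; and for each arc `uv` of the
digraph the two contracts `a'_u a_v` (tagged `false`) and `b'_u b_v` (tagged `true`). -/
abbrev GContract (V : Type) (adj : V → V → Bool) : Type :=
  (V × Fin 8) ⊕ (({p : V × V // adj p.1 p.2 = true}) × Bool)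

/-- Seller of each gadget contract. -/
def gSell {V : Type} (adj : V → V → Bool) : GContract V adj → GFirm V
  | Sum.inl (v, i) =>
      ![Sum.inl false, Sum.inr (v, 0), Sum.inr (v, 0), Sum.inr (v, 1), Sum.inr (v, 3),
        Sum.inr (v, 2), Sum.inr (v, 4), Sum.inr (v, 5)] i
  | Sum.inr (⟨(u, _), _⟩, false) => Sum.inr (u, 2)
  | Sum.inr (⟨(u, _), _⟩, true) => Sum.inr (u, 4)

/-- Buyer of each gadget contract. -/
def gBuy {V : Type} (adj : V → V → Bool) : GContract V adj → GFirm V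
  | Sum.inl (v, i) =>
      ![Sum.inr (v, 0), Sum.inr (v, 1), Sum.inr (v, 3), Sum.inr (v, 2), Sum.inr (v, 4),
        Sum.inr (v, 5), Sum.inr (v, 5), Sum.inl true] i
  | Sum.inr (⟨(_, v), _⟩, false) => Sum.inr (v, 1)
  | Sum.inr (⟨(_, v), _⟩, true) => Sum.inr (v, 3)

/-- The gadget trading network built from the digraph `adj`, with choice functions `C`. -/
def gadgetNet {V : Type} (adj : V → V → Bool)
    (C : GFirm V → Finset (GContract V adj) → Finset (GContract V adj)) :
    TradingNetwork (GFirm V) (GContract V adj) :=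
  ⟨gSell adj, gBuy adj, C⟩

/-- The preference restrictions of the reduction: each `s_v` prefers `s_v a_v` to `s_v b_v`;
each `t_v` prefers `b'_v t_v` to `a'_v t_v`; and every firm prefers its gadget (non-`Z`)
contracts to its arc (`Z`) contracts, on both sides. -/
structure GadgetPrefs {V : Type} [DecidableEq V] [Fintype V] (adj : V → V → Bool)
    (C : GFirm V → Finset (GContract V adj) → Finset (GContract V adj))
    (rkB rkS : GFirm V → GContract V adj → ℕ) : Prop where
  sv_pref : ∀ v : V, rkS (Sum.inr (v, 0)) (Sum.inl (v, 1)) < rkS (Sum.inr (v, 0)) (Sum.inl (v, 2))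
  tv_pref : ∀ v : V, rkB (Sum.inr (v, 5)) (Sum.inl (v, 6)) < rkB (Sum.inr (v, 5)) (Sum.inl (v, 5))
  nonZ_first_B : ∀ f : GFirm V, ∀ x ∈ (gadgetNet adj C).XB f, ∀ y ∈ (gadgetNet adj C).XB f,
    x.isLeft → y.isRight → rkB f x < rkB f y
  nonZ_first_S : ∀ f : GFirm V, ∀ x ∈ (gadgetNet adj C).XS f, ∀ y ∈ (gadgetNet adj C).XS f,
    x.isLeft → y.isRight → rkS f x < rkS f y

/-- Whether a gadget contract belongs to the outcome `A(Q)` of the reduction. -/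
def gOutcomeMem {V : Type} [DecidableEq V] (Q : Finset V) {adj : V → V → Bool} :
    GContract V adj → Bool
  | Sum.inl (v, i) =>
      if v ∈ Q then i = 0 ∨ i = 2 ∨ i = 4 ∨ i = 6 ∨ i = 7
      else i = 0 ∨ i = 1 ∨ i = 3 ∨ i = 5 ∨ i = 7
  | Sum.inr _ => false

/-- The outcome `A(Q)` of the reduction: for `v ∈ Q` the contracts
`{s s_v, s_v b_v, b_v b'_v, b'_v t_v, t_v t}`, and for `v ∉ Q` the contracts
`{s s_v, s_v a_v, a_v a'_v, a'_v t_v, t_v t}`. -/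
def gOutcome {V : Type} [DecidableEq V] [Fintype V] (adj : V → V → Bool) (Q : Finset V) :
    Finset (GContract V adj) :=
  Finset.univ.filter fun x => gOutcomeMem Q x = true

section Gadget
variable {V : Type} {adj : V → V → Bool}

@[simp] lemma gS0 (v:V) : gSell adj (Sum.inl (v,0)) = Sum.inl false := rfl
@[simp] lemma gS1 (v:V) : gSell adj (Sum.inl (v,1)) = Sum.inr (v,0) := rfl
@[simp] lemma gS2 (v:V) : gSell adj (Sum.inl (v,2)) = Sum.inr (v,0) := rfl
@[simp] lemma gS3 (v:V) : gSell adj (Sum.inl (v,3)) = Sum.inr (v,1) := rfl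
@[simp] lemma gS4 (v:V) : gSell adj (Sum.inl (v,4)) = Sum.inr (v,3) := rfl
@[simp] lemma gS5 (v:V) : gSell adj (Sum.inl (v,5)) = Sum.inr (v,2) := rfl
@[simp] lemma gS6 (v:V) : gSell adj (Sum.inl (v,6)) = Sum.inr (v,4) := rfl
@[simp] lemma gS7 (v:V) : gSell adj (Sum.inl (v,7)) = Sum.inr (v,5) := rfl
@[simp] lemma gB0 (v:V) : gBuy adj (Sum.inl (v,0)) = Sum.inr (v,0) := rfl
@[simp] lemma gB1 (v:V) : gBuy adj (Sum.inl (v,1)) = Sum.inr (v,1) := rfl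
@[simp] lemma gB2 (v:V) : gBuy adj (Sum.inl (v,2)) = Sum.inr (v,3) := rfl
@[simp] lemma gB3 (v:V) : gBuy adj (Sum.inl (v,3)) = Sum.inr (v,2) := rfl
@[simp] lemma gB4 (v:V) : gBuy adj (Sum.inl (v,4)) = Sum.inr (v,4) := rfl
@[simp] lemma gB5 (v:V) : gBuy adj (Sum.inl (v,5)) = Sum.inr (v,5) := rfl
@[simp] lemma gB6 (v:V) : gBuy adj (Sum.inl (v,6)) = Sum.inr (v,5) := rfl
@[simp] lemma gB7 (v:V) : gBuy adj (Sum.inl (v,7)) = Sum.inl true := rfl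
@[simp] lemma gSZf (u w : V) (h : adj u w = true) : gSell adj (Sum.inr (⟨(u,w),h⟩,false)) = Sum.inr (u,2) := rfl
@[simp] lemma gSZt (u w : V) (h : adj u w = true) : gSell adj (Sum.inr (⟨(u,w),h⟩,true)) = Sum.inr (u,4) := rfl
@[simp] lemma gBZf (u w : V) (h : adj u w = true) : gBuy adj (Sum.inr (⟨(u,w),h⟩,false)) = Sum.inr (w,1) := rfl
@[simp] lemma gBZt (u w : V) (h : adj u w = true) : gBuy adj (Sum.inr (⟨(u,w),h⟩,true)) = Sum.inr (w,3) := rfl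

lemma buy_eq_0 {x : GContract V adj} {v : V} (h : gBuy adj x = Sum.inr (v,0)) : x = Sum.inl (v,0) := by
  rcases x with ⟨w,i⟩ | ⟨⟨⟨u,w⟩,ha⟩, b⟩
  · fin_cases i <;> simp_all
  · cases b <;> simp_all

lemma buy_eq_1 {x : GContract V adj} {v : V} (h : gBuy adj x = Sum.inr (v,1)) :
    x = Sum.inl (v,1) ∨ ∃ u ha, x = Sum.inr (⟨(u,v),ha⟩, false) := by
  rcases x with ⟨w,i⟩ | ⟨⟨⟨u,w⟩,ha⟩, b⟩
  · fin_cases i <;> simp_all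
  · cases b <;> simp_all
    subst h; exact ha

lemma buy_eq_2 {x : GContract V adj} {v : V} (h : gBuy adj x = Sum.inr (v,2)) : x = Sum.inl (v,3) := by
  rcases x with ⟨w,i⟩ | ⟨⟨⟨u,w⟩,ha⟩, b⟩
  · fin_cases i <;> simp_all
  · cases b <;> simp_all

lemma buy_eq_3 {x : GContract V adj} {v : V} (h : gBuy adj x = Sum.inr (v,3)) :
    x = Sum.inl (v,2) ∨ ∃ u ha, x = Sum.inr (⟨(u,v),ha⟩, true) := by
  rcases x with ⟨w,i⟩ | ⟨⟨⟨u,w⟩,ha⟩, b⟩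
  · fin_cases i <;> simp_all
  · cases b <;> simp_all
    subst h; exact ha

lemma buy_eq_4 {x : GContract V adj} {v : V} (h : gBuy adj x = Sum.inr (v,4)) : x = Sum.inl (v,4) := by
  rcases x with ⟨w,i⟩ | ⟨⟨⟨u,w⟩,ha⟩, b⟩
  · fin_cases i <;> simp_all
  · cases b <;> simp_all

lemma buy_eq_5 {x : GContract V adj} {v : V} (h : gBuy adj x = Sum.inr (v,5)) :
    x = Sum.inl (v,5) ∨ x = Sum.inl (v,6) := by
  rcases x with ⟨w,i⟩ | ⟨⟨⟨u,w⟩,ha⟩, b⟩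
  · fin_cases i <;> simp_all
  · cases b <;> simp_all

lemma sell_eq_0 {x : GContract V adj} {v : V} (h : gSell adj x = Sum.inr (v,0)) :
    x = Sum.inl (v,1) ∨ x = Sum.inl (v,2) := by
  rcases x with ⟨w,i⟩ | ⟨⟨⟨u,w⟩,ha⟩, b⟩
  · fin_cases i <;> simp_all
  · cases b <;> simp_all

lemma sell_eq_1 {x : GContract V adj} {v : V} (h : gSell adj x = Sum.inr (v,1)) : x = Sum.inl (v,3) := by
  rcases x with ⟨w,i⟩ | ⟨⟨⟨u,w⟩,ha⟩, b⟩
  · fin_cases i <;> simp_all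
  · cases b <;> simp_all

lemma sell_eq_2 {x : GContract V adj} {v : V} (h : gSell adj x = Sum.inr (v,2)) :
    x = Sum.inl (v,5) ∨ ∃ w ha, x = Sum.inr (⟨(v,w),ha⟩, false) := by
  rcases x with ⟨w,i⟩ | ⟨⟨⟨u,w⟩,ha⟩, b⟩
  · fin_cases i <;> simp_all
  · cases b <;> simp_all
    subst h; exact ha

lemma sell_eq_3 {x : GContract V adj} {v : V} (h : gSell adj x = Sum.inr (v,3)) : x = Sum.inl (v,4) := by
  rcases x with ⟨w,i⟩ | ⟨⟨⟨u,w⟩,ha⟩, b⟩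
  · fin_cases i <;> simp_all
  · cases b <;> simp_all

lemma sell_eq_4 {x : GContract V adj} {v : V} (h : gSell adj x = Sum.inr (v,4)) :
    x = Sum.inl (v,6) ∨ ∃ w ha, x = Sum.inr (⟨(v,w),ha⟩, true) := by
  rcases x with ⟨w,i⟩ | ⟨⟨⟨u,w⟩,ha⟩, b⟩
  · fin_cases i <;> simp_all
  · cases b <;> simp_all
    subst h; exact ha

lemma sell_eq_5 {x : GContract V adj} {v : V} (h : gSell adj x = Sum.inr (v,5)) : x = Sum.inl (v,7) := by
  rcases x with ⟨w,i⟩ | ⟨⟨⟨u,w⟩,ha⟩, b⟩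
  · fin_cases i <;> simp_all
  · cases b <;> simp_all

end Gadget
section ListLemmas
variable {X F V : Type}

lemma chain'_all {R : X → X → Prop} {P : X → Prop} :
    ∀ {l : List X}, l.Chain' R → ∀ h : l ≠ [], P (l.head h) →
    (∀ x y, x ∈ l → y ∈ l → R x y → P x → P y) → ∀ x ∈ l, P x := by
  intro l
  induction l with
  | nil => intro _ h; exact absurd rfl h
  | cons a as ih =>
    intro hc h hh hstep x hx
    rcases List.mem_cons.mp hx with rfl | hx
    · exact hh
    · have has : as ≠ [] := List.ne_nil_of_mem hx
      obtain ⟨hr, hc'⟩ := List.isChain_cons.mp hc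
      have hPb : P (as.head has) := by
        refine hstep a _ List.mem_cons_self (List.mem_cons_of_mem a (List.head_mem has))
          (hr _ ?_) hh
        exact (List.head?_eq_head has)
      exact ih hc' has hPb (fun x y hx hy => hstep x y (List.mem_cons_of_mem a hx)
        (List.mem_cons_of_mem a hy)) x hx

lemma head_not_buyer {sell buy : X → F} {l : List X} (h : l ≠ [])
    (hn : (sell (l.head h) :: l.map buy).Nodup) : ∀ y ∈ l, buy y ≠ sell (l.head h) := by
  intro y hy hb
  have : sell (l.head h) ∉ l.map buy := (List.nodup_cons.mp hn).1
  exact this (hb ▸ List.mem_map_of_mem (f := buy) hy)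

lemma last_not_seller {sell buy : X → F} :
    ∀ {l : List X} (h : l ≠ []), l.Chain' (fun x y => buy x = sell y) →
    (sell (l.head h) :: l.map buy).Nodup → ∀ y ∈ l, sell y ≠ buy (l.getLast h) := by
  intro l
  induction l with
  | nil => intro h; exact absurd rfl h
  | cons a as ih =>
    intro h hc hn y hy
    cases as with
    | nil =>
      rcases List.mem_singleton.mp hy with rfl
      simpa using (List.nodup_cons.mp hn).1
    | cons b bs =>
      have hab : buy a = sell b := (List.isChain_cons_cons.mp hc).1
      have hc' : List.Chain' (fun x y => buy x = sell y) (b :: bs) := (List.isChain_cons_cons.mp hc).2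
      have hlast : (a :: b :: bs).getLast h = (b :: bs).getLast (by simp) := by
        exact List.getLast_cons (by simp)
      have hn1 : sell a ∉ (a :: b :: bs).map buy := by
        simpa using (List.nodup_cons.mp hn).1
      rcases List.mem_cons.mp hy with rfl | hy
      · intro hcontra
        exact hn1 (by
          rw [hcontra]
          exact List.mem_map_of_mem (f := buy) (List.getLast_mem h))
      · have hn' : (sell ((b :: bs).head (by simp)) :: (b :: bs).map buy).Nodup := by
          have : ((a :: b :: bs).map buy).Nodup := (List.nodup_cons.mp hn).2
          simpa [← hab] using this
        rw [hlast]
        exact ih (by simp) hc' hn' y hy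

lemma cycle_pred {sell buy : X → F} {l : List X} (h : l ≠ [])
    (hc : l.Chain' (fun x y => buy x = sell y))
    (hw : buy (l.getLast h) = sell (l.head h)) : ∀ x ∈ l, ∃ y ∈ l, buy y = sell x := by
  intro x hx
  obtain ⟨s, t, rfl⟩ := List.append_of_mem hx
  cases s with
  | nil =>
    refine ⟨(x :: t).getLast (by simp), List.getLast_mem _, ?_⟩
    simpa using hw
  | cons c cs =>
    have hs : (c :: cs) ≠ [] := by simp
    have := (List.isChain_append.mp hc).2.2
    refine ⟨(c :: cs).getLast hs, List.mem_append_left _ (List.getLast_mem hs), ?_⟩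
    exact this _ (List.getLast?_eq_getLast hs) x rfl

lemma cycle_succ {sell buy : X → F} {l : List X} (h : l ≠ [])
    (hc : l.Chain' (fun x y => buy x = sell y))
    (hw : buy (l.getLast h) = sell (l.head h)) : ∀ x ∈ l, ∃ y ∈ l, sell y = buy x := by
  intro x hx
  obtain ⟨s, t, rfl⟩ := List.append_of_mem hx
  cases t with
  | nil =>
    refine ⟨(s ++ [x]).head (by simp), List.head_mem _, ?_⟩
    rw [← hw]
    congr 1
    simp
  | cons c cs =>
    have hc2 : List.Chain' (fun x y => buy x = sell y) ((s ++ [x]) ++ c :: cs) := by simpa using hc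
    have := (List.isChain_append.mp hc2).2.2
    refine ⟨c, by simp, ?_⟩
    exact (this x (by simp [List.getLast?_concat]) c rfl).symm

lemma nodup_filterMap {src : X → Option V} {sell : X → F} :
    ∀ {l : List X}, (l.map sell).Nodup →
    (∀ x ∈ l, ∀ y ∈ l, ∀ u, src x = some u → src y = some u → sell x = sell y) →
    (l.filterMap src).Nodup := by
  intro l
  induction l with
  | nil => simp
  | cons a as ih =>
    intro hn hinj
    rw [List.filterMap_cons]
    rw [List.map_cons] at hn
    have hn' := List.nodup_cons.mp hn
    cases ha : src a with
    | none => exact ih hn'.2 (fun x hx y hy => hinj x (by simp [hx]) y (by simp [hy]))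
    | some u =>
      rw [List.nodup_cons]
      constructor
      · intro hmem
        obtain ⟨y, hy, hyu⟩ := List.mem_filterMap.mp hmem
        have : sell a = sell y := hinj a (by simp) y (by simp [hy]) u ha hyu
        exact hn'.1 (this ▸ List.mem_map_of_mem (f := sell) hy)
      · exact ih hn'.2 (fun x hx y hy => hinj x (by simp [hx]) y (by simp [hy]))

lemma chainW {adj : V → V → Bool} (sell buy : X → F) (sv bv : X → V) (src : X → Option V)
    (P : X → Prop)
    (h1 : ∀ x y, P x → P y → buy x = sell y → sv y = bv x)
    (h2 : ∀ x, P x → (src x = none ∧ bv x = sv x) ∨ (src x = some (sv x) ∧ adj (sv x) (bv x) = true)) :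
    ∀ (l : List X), l.Chain' (fun a b => buy a = sell b) → (∀ x ∈ l, P x) → ∀ h : l ≠ [],
      (l.filterMap src ++ [bv (l.getLast h)]).Chain' (fun u v => adj u v = true) ∧
      (l.filterMap src ++ [bv (l.getLast h)]).head? = some (sv (l.head h)) := by
  intro l
  induction l with
  | nil => intro _ _ h; exact absurd rfl h
  | cons a as ih =>
    intro hc hP h
    cases as with
    | nil =>
      rcases h2 a (hP a (by simp)) with ⟨hs, hb⟩ | ⟨hs, hb⟩ <;>
        simp [List.filterMap_cons, hs, hb, List.Chain', List.isChain_pair]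
    | cons b bs =>
      have hab : buy a = sell b := (List.isChain_cons_cons.mp hc).1
      have IH := ih (List.isChain_cons_cons.mp hc).2 (fun x hx => hP x (List.mem_cons_of_mem a hx))
        (by simp)
      have hsvb : sv b = bv a := h1 a b (hP a (by simp)) (hP b (by simp)) hab
      have hlast : (a :: b :: bs).getLast h = (b :: bs).getLast (by simp) :=
        List.getLast_cons (by simp)
      have hheadb : (b :: bs).head (by simp) = b := rfl
      rcases h2 a (hP a (by simp)) with ⟨hs, hb⟩ | ⟨hs, hb⟩
      · rw [hlast, List.filterMap_cons, hs]
        refine ⟨IH.1, ?_⟩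
        rw [IH.2]
        simp [hheadb, hsvb, hb]
      · rw [hlast, List.filterMap_cons, hs]
        constructor
        · rw [List.cons_append]; unfold List.Chain'; rw [List.isChain_cons]
          refine ⟨?_, IH.1⟩
          intro y hy
          rw [IH.2] at hy
          simp only [hheadb, Option.mem_def, Option.some.injEq] at hy
          rw [← hy, hsvb]; exact hb
        · simp

end ListLemmas
namespace TradingNetwork
section Choice
variable {F X : Type} [DecidableEq F] [DecidableEq X] [Fintype X]
variable {N : TradingNetwork F X} {rkB rkS : F → X → ℕ}

lemma no_up_flow (hFB : N.FlowBased rkB rkS) {f : F} (hf : ¬ N.Terminal f) {Y : Finset X} {x : X}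
    (hx : x ∈ N.C f Y) (hb : N.buy x = f) (hS : Y ∩ N.XS f = ∅) : False := by
  have ht := (hFB.top_choice f hf Y).1
  have hxB : x ∈ N.C f Y ∩ N.XB f :=
    mem_inter.mpr ⟨hx, mem_filter.mpr ⟨mem_univ x, hb⟩⟩
  have hcard : (N.C f Y ∩ N.XB f).card = 0 := by
    rw [ht.2.1, hS]; simp
  rw [Finset.card_eq_zero] at hcard
  rw [hcard] at hxB
  exact absurd hxB (Finset.notMem_empty x)

lemma no_dn_flow (hFB : N.FlowBased rkB rkS) {f : F} (hf : ¬ N.Terminal f) {Y : Finset X} {x : X}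
    (hx : x ∈ N.C f Y) (hs : N.sell x = f) (hB : Y ∩ N.XB f = ∅) : False := by
  have ht := (hFB.top_choice f hf Y).2
  have hxS : x ∈ N.C f Y ∩ N.XS f :=
    mem_inter.mpr ⟨hx, mem_filter.mpr ⟨mem_univ x, hs⟩⟩
  have hcard : (N.C f Y ∩ N.XS f).card = 0 := by
    rw [ht.2.1, hB]; simp
  rw [Finset.card_eq_zero] at hcard
  rw [hcard] at hxS
  exact absurd hxS (Finset.notMem_empty x)

lemma pref_excl_B (hFB : N.FlowBased rkB rkS) {f : F} (hf : ¬ N.Terminal f) {Y : Finset X}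
    {x y : X} (hx : x ∈ N.C f Y) (hbx : N.buy x = f) (hy : y ∈ Y) (hby : N.buy y = f)
    (hcard : (Y ∩ N.XS f).card ≤ 1) (hrk : rkB f y < rkB f x) : False := by
  have ht := (hFB.top_choice f hf Y).1
  have hxB : x ∈ N.C f Y ∩ N.XB f :=
    mem_inter.mpr ⟨hx, mem_filter.mpr ⟨mem_univ x, hbx⟩⟩
  have hyY : y ∈ Y ∩ N.XB f := mem_inter.mpr ⟨hy, mem_filter.mpr ⟨mem_univ y, hby⟩⟩
  by_cases hyC : y ∈ N.C f Y ∩ N.XB f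
  · have hc1 : (N.C f Y ∩ N.XB f).card ≤ 1 := ht.2.1 ▸ le_trans (min_le_right _ _) hcard
    have : x = y := Finset.card_le_one.mp hc1 x hxB y hyC
    subst this
    exact lt_irrefl _ hrk
  · exact absurd (ht.2.2 x hxB y hyY hyC) (by omega)

lemma pref_excl_S (hFB : N.FlowBased rkB rkS) {f : F} (hf : ¬ N.Terminal f) {Y : Finset X}
    {x y : X} (hx : x ∈ N.C f Y) (hsx : N.sell x = f) (hy : y ∈ Y) (hsy : N.sell y = f)
    (hcard : (Y ∩ N.XB f).card ≤ 1) (hrk : rkS f y < rkS f x) : False := by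
  have ht := (hFB.top_choice f hf Y).2
  have hxS : x ∈ N.C f Y ∩ N.XS f :=
    mem_inter.mpr ⟨hx, mem_filter.mpr ⟨mem_univ x, hsx⟩⟩
  have hyY : y ∈ Y ∩ N.XS f := mem_inter.mpr ⟨hy, mem_filter.mpr ⟨mem_univ y, hsy⟩⟩
  by_cases hyC : y ∈ N.C f Y ∩ N.XS f
  · have hc1 : (N.C f Y ∩ N.XS f).card ≤ 1 := ht.2.1 ▸ le_trans (min_le_left _ _) hcard
    have : x = y := Finset.card_le_one.mp hc1 x hxS y hyC
    subst this
    exact lt_irrefl _ hrk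
  · exact absurd (ht.2.2 x hxS y hyY hyC) (by omega)

lemma own_union_inter_XB (N : TradingNetwork F X) (f : F) (A B : Finset X) :
    (N.own f A ∪ N.own f B) ∩ N.XB f
      = A.filter (fun x => N.buy x = f) ∪ B.filter (fun x => N.buy x = f) := by
  ext x
  simp only [own, XB, mem_inter, mem_union, mem_filter, mem_univ, true_and]
  tauto

lemma own_union_inter_XS (N : TradingNetwork F X) (f : F) (A B : Finset X) :
    (N.own f A ∪ N.own f B) ∩ N.XS f
      = A.filter (fun x => N.sell x = f) ∪ B.filter (fun x => N.sell x = f) := by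
  ext x
  simp only [own, XS, mem_inter, mem_union, mem_filter, mem_univ, true_and]
  tauto

lemma nonterminal_of (N : TradingNetwork F X) {f : F} (x y : X)
    (hx : N.buy x = f) (hy : N.sell y = f) : ¬ N.Terminal f := by
  rintro (h | h)
  · have : x ∈ N.XB f := mem_filter.mpr ⟨mem_univ x, hx⟩
    rw [h] at this
    exact absurd this (Finset.notMem_empty x)
  · have : y ∈ N.XS f := mem_filter.mpr ⟨mem_univ y, hy⟩
    rw [h] at this
    exact absurd this (Finset.notMem_empty y)

end Choice
end TradingNetwork
section GadgetAux
variable {V : Type} {adj : V → V → Bool}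

/-- Seller-side vertex of a gadget contract. -/
def gsv : GContract V adj → V
  | Sum.inl (v, _) => v
  | Sum.inr (⟨(u, _), _⟩, _) => u

/-- Buyer-side vertex of a gadget contract. -/
def gbv : GContract V adj → V
  | Sum.inl (v, _) => v
  | Sum.inr (⟨(_, w), _⟩, _) => w

/-- Source vertex of an arc contract. -/
def gsrc : GContract V adj → Option V
  | Sum.inl _ => none
  | Sum.inr (⟨(u, _), _⟩, _) => some u

@[simp] lemma gsv_inl (v : V) (i : Fin 8) : gsv (Sum.inl (v,i) : GContract V adj) = v := rfl
@[simp] lemma gsv_inr (u w : V) (ha : adj u w = true) (b : Bool) :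
    gsv (Sum.inr (⟨(u,w),ha⟩, b) : GContract V adj) = u := rfl
@[simp] lemma gbv_inl (v : V) (i : Fin 8) : gbv (Sum.inl (v,i) : GContract V adj) = v := rfl
@[simp] lemma gbv_inr (u w : V) (ha : adj u w = true) (b : Bool) :
    gbv (Sum.inr (⟨(u,w),ha⟩, b) : GContract V adj) = w := rfl
@[simp] lemma gsrc_inl (v : V) (i : Fin 8) : gsrc (Sum.inl (v,i) : GContract V adj) = none := rfl
@[simp] lemma gsrc_inr (u w : V) (ha : adj u w = true) (b : Bool) :
    gsrc (Sum.inr (⟨(u,w),ha⟩, b) : GContract V adj) = some u := rfl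

end GadgetAux

section GadgetNetAux
variable {V : Type} [DecidableEq V] [Fintype V] (adj : V → V → Bool)
  (C : GFirm V → Finset (GContract V adj) → Finset (GContract V adj))

@[simp] lemma gadgetNet_sell : (gadgetNet adj C).sell = gSell adj := rfl
@[simp] lemma gadgetNet_buy : (gadgetNet adj C).buy = gBuy adj := rfl

end GadgetNetAux

/-- If the vertices of the digraph can be partitioned into two acyclic
sets `Q` and `Qᶜ`, then the outcome `A(Q)` of the gadget network admits no blocking path
and no blocking cycle. -/
theorem gadget_outcome_unblocked {V : Type} [DecidableEq V] [Fintype V]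
    (adj : V → V → Bool)
    (C : GFirm V → Finset (GContract V adj) → Finset (GContract V adj))
    (rkB rkS : GFirm V → GContract V adj → ℕ)
    (hN : (gadgetNet adj C).IsFlowNetwork rkB rkS)
    (hpref : GadgetPrefs adj C rkB rkS)
    (Q : Finset V) (hQ : ¬ HasCycleIn adj Q) (hR : ¬ HasCycleIn adj Qᶜ) :
    ¬ ∃ l, (gadgetNet adj C).BlockingPathOrCycle (gOutcome adj Q) l := by
  rintro ⟨l, hPC, hdisj, hacc⟩
  obtain ⟨-, hFB, -⟩ := hN
  set N := gadgetNet adj C with hNdef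
  set A := gOutcome adj Q with hAdef
  set W := l.toFinset with hWdef
  -- membership facts for A
  have hAmemQ : ∀ v ∈ Q, ∀ i : Fin 8,
      ((Sum.inl (v,i) : GContract V adj) ∈ A ↔ (i = 0 ∨ i = 2 ∨ i = 4 ∨ i = 6 ∨ i = 7)) := by
    intro v hv i
    simp [hAdef, gOutcome, gOutcomeMem, hv]
  have hAmemR : ∀ v ∉ Q, ∀ i : Fin 8,
      ((Sum.inl (v,i) : GContract V adj) ∈ A ↔ (i = 0 ∨ i = 1 ∨ i = 3 ∨ i = 5 ∨ i = 7)) := by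
    intro v hv i
    simp [hAdef, gOutcome, gOutcomeMem, hv]
  have hAZ : ∀ z, (Sum.inr z : GContract V adj) ∉ A := by
    intro z
    simp [hAdef, gOutcome, gOutcomeMem]
  have hnA : ∀ x ∈ l, x ∉ A := fun x hx hxA =>
    (Finset.disjoint_left.mp hdisj) (List.mem_toFinset.mpr hx) hxA
  -- acceptance
  have hC : ∀ (f : GFirm V) (x : GContract V adj), x ∈ l →
      (gSell adj x = f ∨ gBuy adj x = f) → x ∈ N.C f (N.own f A ∪ N.own f W) := by
    intro f x hx hor
    have hxW : x ∈ N.own f W := Finset.mem_filter.mpr ⟨List.mem_toFinset.mpr hx, hor⟩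
    exact hacc f ⟨x, hxW⟩ hxW
  -- cardinality bounds
  have hcardB : ∀ (f : GFirm V) (y0 : GContract V adj),
      (∀ z : GContract V adj, gBuy adj z = f → z = y0) →
      ((N.own f A ∪ N.own f W) ∩ N.XB f).card ≤ 1 := by
    intro f y0 hinv
    rw [TradingNetwork.own_union_inter_XB]
    refine Finset.card_le_one.mpr ?_
    intro a ha b hb
    simp only [Finset.mem_union, Finset.mem_filter] at ha hb
    have ha' : gBuy adj a = f := by rcases ha with ⟨_, h⟩ | ⟨_, h⟩ <;> exact h
    have hb' : gBuy adj b = f := by rcases hb with ⟨_, h⟩ | ⟨_, h⟩ <;> exact h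
    rw [hinv a ha', hinv b hb']
  have hcardS : ∀ (f : GFirm V) (y0 : GContract V adj),
      (∀ z : GContract V adj, gSell adj z = f → z = y0) →
      ((N.own f A ∪ N.own f W) ∩ N.XS f).card ≤ 1 := by
    intro f y0 hinv
    rw [TradingNetwork.own_union_inter_XS]
    refine Finset.card_le_one.mpr ?_
    intro a ha b hb
    simp only [Finset.mem_union, Finset.mem_filter] at ha hb
    have ha' : gSell adj a = f := by rcases ha with ⟨_, h⟩ | ⟨_, h⟩ <;> exact h
    have hb' : gSell adj b = f := by rcases hb with ⟨_, h⟩ | ⟨_, h⟩ <;> exact h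
    rw [hinv a ha', hinv b hb']
  -- one-sided flow contradictions
  have hK1 : ∀ (f : GFirm V) (x : GContract V adj), ¬ N.Terminal f → x ∈ l → gBuy adj x = f →
      (∀ y ∈ A, gSell adj y ≠ f) → (∀ y ∈ l, gSell adj y ≠ f) → False := by
    intro f x hf hx hb hA hl
    refine TradingNetwork.no_up_flow hFB hf (hC f x hx (Or.inr hb)) hb ?_
    rw [TradingNetwork.own_union_inter_XS]
    refine Finset.union_eq_empty.mpr ⟨?_, ?_⟩ <;> rw [Finset.filter_eq_empty_iff]
    · exact fun y hy => hA y hy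
    · exact fun y hy => hl y (List.mem_toFinset.mp hy)
  have hK1' : ∀ (f : GFirm V) (x : GContract V adj), ¬ N.Terminal f → x ∈ l → gSell adj x = f →
      (∀ y ∈ A, gBuy adj y ≠ f) → (∀ y ∈ l, gBuy adj y ≠ f) → False := by
    intro f x hf hx hs hA hl
    refine TradingNetwork.no_dn_flow hFB hf (hC f x hx (Or.inl hs)) hs ?_
    rw [TradingNetwork.own_union_inter_XB]
    refine Finset.union_eq_empty.mpr ⟨?_, ?_⟩ <;> rw [Finset.filter_eq_empty_iff]
    · exact fun y hy => hA y hy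
    · exact fun y hy => hl y (List.mem_toFinset.mp hy)
  -- classification of contracts in l
  have hclass : ∀ x ∈ l,
      (∃ v, v ∈ Q ∧ (x = Sum.inl (v,1) ∨ x = Sum.inl (v,3))) ∨
      (∃ u w ha, u ∈ Q ∧ w ∈ Q ∧ x = Sum.inr (⟨(u,w),ha⟩, false)) ∨
      (∃ v, v ∉ Q ∧ (x = Sum.inl (v,4) ∨ x = Sum.inl (v,6))) ∨
      (∃ u w ha, u ∉ Q ∧ w ∉ Q ∧ x = Sum.inr (⟨(u,w),ha⟩, true)) := by
    intro x hx
    have hxA := hnA x hx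
    rcases x with ⟨v,i⟩ | ⟨⟨⟨u,w⟩,ha⟩, b⟩
    · fin_cases i
      · refine absurd ?_ hxA
        by_cases hv : v ∈ Q
        · exact (hAmemQ v hv 0).mpr (by simp)
        · exact (hAmemR v hv 0).mpr (by simp)
      · by_cases hv : v ∈ Q
        · exact Or.inl ⟨v, hv, Or.inl rfl⟩
        · exact absurd ((hAmemR v hv 1).mpr (by simp)) hxA
      · by_cases hv : v ∈ Q
        · exact absurd ((hAmemQ v hv 2).mpr (by simp)) hxA
        · exfalso
          have hf : ¬ N.Terminal (Sum.inr (v,0)) :=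
            TradingNetwork.nonterminal_of N (Sum.inl (v,0)) (Sum.inl (v,1)) rfl rfl
          have hyA : (Sum.inl (v,1) : GContract V adj) ∈ A := (hAmemR v hv 1).mpr (by simp)
          have hyY : (Sum.inl (v,1) : GContract V adj) ∈
              N.own (Sum.inr (v,0)) A ∪ N.own (Sum.inr (v,0)) W :=
            Finset.mem_union_left _ (Finset.mem_filter.mpr ⟨hyA, Or.inl rfl⟩)
          exact TradingNetwork.pref_excl_S hFB hf (hC _ _ hx (Or.inl rfl)) rfl hyY rfl
            (hcardB _ (Sum.inl (v,0)) (fun z hz => buy_eq_0 hz)) (hpref.sv_pref v)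
      · by_cases hv : v ∈ Q
        · exact Or.inl ⟨v, hv, Or.inr rfl⟩
        · exact absurd ((hAmemR v hv 3).mpr (by simp)) hxA
      · by_cases hv : v ∈ Q
        · exact absurd ((hAmemQ v hv 4).mpr (by simp)) hxA
        · exact Or.inr (Or.inr (Or.inl ⟨v, hv, Or.inl rfl⟩))
      · by_cases hv : v ∈ Q
        · exfalso
          have hf : ¬ N.Terminal (Sum.inr (v,5)) :=
            TradingNetwork.nonterminal_of N (Sum.inl (v,5)) (Sum.inl (v,7)) rfl rfl
          have hyA : (Sum.inl (v,6) : GContract V adj) ∈ A := (hAmemQ v hv 6).mpr (by simp)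
          have hyY : (Sum.inl (v,6) : GContract V adj) ∈
              N.own (Sum.inr (v,5)) A ∪ N.own (Sum.inr (v,5)) W :=
            Finset.mem_union_left _ (Finset.mem_filter.mpr ⟨hyA, Or.inr rfl⟩)
          exact TradingNetwork.pref_excl_B hFB hf (hC _ _ hx (Or.inr rfl)) rfl hyY rfl
            (hcardS _ (Sum.inl (v,7)) (fun z hz => sell_eq_5 hz)) (hpref.tv_pref v)
        · exact absurd ((hAmemR v hv 5).mpr (by simp)) hxA
      · by_cases hv : v ∈ Q
        · exact absurd ((hAmemQ v hv 6).mpr (by simp)) hxA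
        · exact Or.inr (Or.inr (Or.inl ⟨v, hv, Or.inr rfl⟩))
      · refine absurd ?_ hxA
        by_cases hv : v ∈ Q
        · exact (hAmemQ v hv 7).mpr (by simp)
        · exact (hAmemR v hv 7).mpr (by simp)
    · cases b
      · by_cases hu : u ∈ Q
        · by_cases hw : w ∈ Q
          · exact Or.inr (Or.inl ⟨u, w, ha, hu, hw, rfl⟩)
          · exfalso
            have hf : ¬ N.Terminal (Sum.inr (w,1)) :=
              TradingNetwork.nonterminal_of N (Sum.inl (w,1)) (Sum.inl (w,3)) rfl rfl
            have hyA : (Sum.inl (w,1) : GContract V adj) ∈ A := (hAmemR w hw 1).mpr (by simp)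
            have hyY : (Sum.inl (w,1) : GContract V adj) ∈
                N.own (Sum.inr (w,1)) A ∪ N.own (Sum.inr (w,1)) W :=
              Finset.mem_union_left _ (Finset.mem_filter.mpr ⟨hyA, Or.inr rfl⟩)
            refine TradingNetwork.pref_excl_B hFB hf (hC _ _ hx (Or.inr rfl)) rfl hyY rfl
              (hcardS _ (Sum.inl (w,3)) (fun z hz => sell_eq_1 hz)) ?_
            exact hpref.nonZ_first_B (Sum.inr (w,1)) (Sum.inl (w,1))
              (Finset.mem_filter.mpr ⟨Finset.mem_univ _, rfl⟩) (Sum.inr (⟨(u,w),ha⟩, false))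
              (Finset.mem_filter.mpr ⟨Finset.mem_univ _, rfl⟩) rfl rfl
        · exfalso
          have hf : ¬ N.Terminal (Sum.inr (u,2)) :=
            TradingNetwork.nonterminal_of N (Sum.inl (u,3)) (Sum.inl (u,5)) rfl rfl
          have hyA : (Sum.inl (u,5) : GContract V adj) ∈ A := (hAmemR u hu 5).mpr (by simp)
          have hyY : (Sum.inl (u,5) : GContract V adj) ∈
              N.own (Sum.inr (u,2)) A ∪ N.own (Sum.inr (u,2)) W :=
            Finset.mem_union_left _ (Finset.mem_filter.mpr ⟨hyA, Or.inl rfl⟩)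
          refine TradingNetwork.pref_excl_S hFB hf (hC _ _ hx (Or.inl rfl)) rfl hyY rfl
            (hcardB _ (Sum.inl (u,3)) (fun z hz => buy_eq_2 hz)) ?_
          exact hpref.nonZ_first_S (Sum.inr (u,2)) (Sum.inl (u,5))
            (Finset.mem_filter.mpr ⟨Finset.mem_univ _, rfl⟩) (Sum.inr (⟨(u,w),ha⟩, false))
            (Finset.mem_filter.mpr ⟨Finset.mem_univ _, rfl⟩) rfl rfl
      · by_cases hu : u ∈ Q
        · exfalso
          have hf : ¬ N.Terminal (Sum.inr (u,4)) :=
            TradingNetwork.nonterminal_of N (Sum.inl (u,4)) (Sum.inl (u,6)) rfl rfl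
          have hyA : (Sum.inl (u,6) : GContract V adj) ∈ A := (hAmemQ u hu 6).mpr (by simp)
          have hyY : (Sum.inl (u,6) : GContract V adj) ∈
              N.own (Sum.inr (u,4)) A ∪ N.own (Sum.inr (u,4)) W :=
            Finset.mem_union_left _ (Finset.mem_filter.mpr ⟨hyA, Or.inl rfl⟩)
          refine TradingNetwork.pref_excl_S hFB hf (hC _ _ hx (Or.inl rfl)) rfl hyY rfl
            (hcardB _ (Sum.inl (u,4)) (fun z hz => buy_eq_4 hz)) ?_
          exact hpref.nonZ_first_S (Sum.inr (u,4)) (Sum.inl (u,6))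
            (Finset.mem_filter.mpr ⟨Finset.mem_univ _, rfl⟩) (Sum.inr (⟨(u,w),ha⟩, true))
            (Finset.mem_filter.mpr ⟨Finset.mem_univ _, rfl⟩) rfl rfl
        · by_cases hw : w ∈ Q
          · exfalso
            have hf : ¬ N.Terminal (Sum.inr (w,3)) :=
              TradingNetwork.nonterminal_of N (Sum.inl (w,2)) (Sum.inl (w,4)) rfl rfl
            have hyA : (Sum.inl (w,2) : GContract V adj) ∈ A := (hAmemQ w hw 2).mpr (by simp)
            have hyY : (Sum.inl (w,2) : GContract V adj) ∈
                N.own (Sum.inr (w,3)) A ∪ N.own (Sum.inr (w,3)) W :=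
              Finset.mem_union_left _ (Finset.mem_filter.mpr ⟨hyA, Or.inr rfl⟩)
            refine TradingNetwork.pref_excl_B hFB hf (hC _ _ hx (Or.inr rfl)) rfl hyY rfl
              (hcardS _ (Sum.inl (w,4)) (fun z hz => sell_eq_3 hz)) ?_
            exact hpref.nonZ_first_B (Sum.inr (w,3)) (Sum.inl (w,2))
              (Finset.mem_filter.mpr ⟨Finset.mem_univ _, rfl⟩) (Sum.inr (⟨(u,w),ha⟩, true))
              (Finset.mem_filter.mpr ⟨Finset.mem_univ _, rfl⟩) rfl rfl
          · exact Or.inr (Or.inr (Or.inr ⟨u, w, ha, hu, hw, rfl⟩))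

  -- a-side propagation step
  have hstepA : ∀ x y : GContract V adj, x ∈ l → y ∈ l → N.buy x = N.sell y →
      ((∃ v, v ∈ Q ∧ (x = Sum.inl (v,1) ∨ x = Sum.inl (v,3))) ∨
       (∃ u w ha, u ∈ Q ∧ w ∈ Q ∧ x = Sum.inr (⟨(u,w),ha⟩, false))) →
      ((∃ v, v ∈ Q ∧ (y = Sum.inl (v,1) ∨ y = Sum.inl (v,3))) ∨
       (∃ u w ha, u ∈ Q ∧ w ∈ Q ∧ y = Sum.inr (⟨(u,w),ha⟩, false))) := by
    intro x y hx hy hxy hX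
    rcases hclass y hy with hY | hY | hY | hY
    · exact Or.inl hY
    · exact Or.inr hY
    · exfalso
      rcases hY with ⟨v1, hv1, rfl | rfl⟩ <;>
        rcases hX with ⟨v0, hv0, rfl | rfl⟩ | ⟨u0, w0, ha0, hu0, hw0, rfl⟩ <;>
        simp [hNdef] at hxy
    · exfalso
      obtain ⟨u1, w1, ha1, hu1, hw1, rfl⟩ := hY
      rcases hX with ⟨v0, hv0, rfl | rfl⟩ | ⟨u0, w0, ha0, hu0, hw0, rfl⟩ <;>
        simp [hNdef] at hxy
  -- b-side propagation step
  have hstepB : ∀ x y : GContract V adj, x ∈ l → y ∈ l → N.buy x = N.sell y →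
      ((∃ v, v ∉ Q ∧ (x = Sum.inl (v,4) ∨ x = Sum.inl (v,6))) ∨
       (∃ u w ha, u ∉ Q ∧ w ∉ Q ∧ x = Sum.inr (⟨(u,w),ha⟩, true))) →
      ((∃ v, v ∉ Q ∧ (y = Sum.inl (v,4) ∨ y = Sum.inl (v,6))) ∨
       (∃ u w ha, u ∉ Q ∧ w ∉ Q ∧ y = Sum.inr (⟨(u,w),ha⟩, true))) := by
    intro x y hx hy hxy hX
    rcases hclass y hy with hY | hY | hY | hY
    · exfalso
      rcases hY with ⟨v1, hv1, rfl | rfl⟩ <;>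
        rcases hX with ⟨v0, hv0, rfl | rfl⟩ | ⟨u0, w0, ha0, hu0, hw0, rfl⟩ <;>
        simp [hNdef] at hxy
    · exfalso
      obtain ⟨u1, w1, ha1, hu1, hw1, rfl⟩ := hY
      rcases hX with ⟨v0, hv0, rfl | rfl⟩ | ⟨u0, w0, ha0, hu0, hw0, rfl⟩ <;>
        simp [hNdef] at hxy
    · exact Or.inl hY
    · exact Or.inr hY
  rcases hPC with hpath | hcycle
  · -- PATH CASE
    obtain ⟨h, hchain, hnodup⟩ := hpath
    have hlastmem := List.getLast_mem h
    have hheadmem := List.head_mem h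
    have hlns := last_not_seller h hchain hnodup
    have hhnb := head_not_buyer h hnodup
    have hend : ∀ f : GFirm V, ¬ N.Terminal f → N.buy (l.getLast h) = f →
        (∀ y ∈ A, gSell adj y ≠ f) → False := by
      intro f hf hb hA
      refine hK1 f (l.getLast h) hf hlastmem hb hA ?_
      intro y hy
      have := hlns y hy
      rwa [hb] at this
    have hstart : ∀ f : GFirm V, ¬ N.Terminal f → N.sell (l.head h) = f →
        (∀ y ∈ A, gBuy adj y ≠ f) → False := by
      intro f hf hs hA
      refine hK1' f (l.head h) hf hheadmem hs hA ?_
      intro y hy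
      have := hhnb y hy
      rwa [hs] at this
    rcases hclass _ hlastmem with ⟨v, hv, hcase | hcase⟩ | ⟨u, w, ha, hu, hw, hcase⟩ |
      ⟨v, hv, hcase | hcase⟩ | ⟨u, w, ha, hu, hw, hcase⟩
    · -- last = s_v a_v, v ∈ Q : ends at a_v
      refine hend (Sum.inr (v,1))
        (TradingNetwork.nonterminal_of N (Sum.inl (v,1)) (Sum.inl (v,3)) rfl rfl)
        (by simp [hNdef, hcase]) ?_
      intro y hy hsy
      have := sell_eq_1 hsy
      subst this
      have h3 := (hAmemQ v hv 3).mp hy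
      simp at h3
    · -- last = a_v a'_v, v ∈ Q : ends at a'_v
      refine hend (Sum.inr (v,2))
        (TradingNetwork.nonterminal_of N (Sum.inl (v,3)) (Sum.inl (v,5)) rfl rfl)
        (by simp [hNdef, hcase]) ?_
      intro y hy hsy
      rcases sell_eq_2 hsy with rfl | ⟨w', ha', rfl⟩
      · have h5 := (hAmemQ v hv 5).mp hy
        simp at h5
      · exact hAZ _ hy
    · -- last = a'_u a_w : ends at a_w, w ∈ Q
      refine hend (Sum.inr (w,1))
        (TradingNetwork.nonterminal_of N (Sum.inl (w,1)) (Sum.inl (w,3)) rfl rfl)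
        (by simp [hNdef, hcase]) ?_
      intro y hy hsy
      have := sell_eq_1 hsy
      subst this
      have h3 := (hAmemQ w hw 3).mp hy
      simp at h3
    · -- last = b_v b'_v, v ∉ Q : ends at b'_v
      refine hend (Sum.inr (v,4))
        (TradingNetwork.nonterminal_of N (Sum.inl (v,4)) (Sum.inl (v,6)) rfl rfl)
        (by simp [hNdef, hcase]) ?_
      intro y hy hsy
      rcases sell_eq_4 hsy with rfl | ⟨w', ha', rfl⟩
      · have h6 := (hAmemR v hv 6).mp hy
        simp at h6
      · exact hAZ _ hy
    · -- last = b'_v t_v, v ∉ Q : ends at t_v; analyse the head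
      rcases hclass _ hheadmem with hH | hH | ⟨v', hv', hH | hH⟩ | ⟨u', w', ha', hu', hw', hH⟩
      · have hall := chain'_all hchain h (Or.inl hH) hstepA
        have hlastA := hall _ hlastmem
        rw [hcase] at hlastA
        rcases hlastA with ⟨v0, _, h0 | h0⟩ | ⟨u0, w0, ha0, _, _, h0⟩ <;> simp at h0
      · have hall := chain'_all hchain h (Or.inr hH) hstepA
        have hlastA := hall _ hlastmem
        rw [hcase] at hlastA
        rcases hlastA with ⟨v0, _, h0 | h0⟩ | ⟨u0, w0, ha0, _, _, h0⟩ <;> simp at h0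
      · -- head = b_v' b'_v', v' ∉ Q : starts at b_v'
        refine hstart (Sum.inr (v',3))
          (TradingNetwork.nonterminal_of N (Sum.inl (v',2)) (Sum.inl (v',4)) rfl rfl)
          (by simp [hNdef, hH]) ?_
        intro y hy hby
        rcases buy_eq_3 hby with rfl | ⟨u0, ha0, rfl⟩
        · have h2 := (hAmemR v' hv' 2).mp hy
          simp at h2
        · exact hAZ _ hy
      · -- head = b'_v' t_v', v' ∉ Q : starts at b'_v'
        refine hstart (Sum.inr (v',4))
          (TradingNetwork.nonterminal_of N (Sum.inl (v',4)) (Sum.inl (v',6)) rfl rfl)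
          (by simp [hNdef, hH]) ?_
        intro y hy hby
        have := buy_eq_4 hby
        subst this
        have h4 := (hAmemR v' hv' 4).mp hy
        simp at h4
      · -- head = b'_u' b_w', u' ∉ Q : starts at b'_u'
        refine hstart (Sum.inr (u',4))
          (TradingNetwork.nonterminal_of N (Sum.inl (u',4)) (Sum.inl (u',6)) rfl rfl)
          (by simp [hNdef, hH]) ?_
        intro y hy hby
        have := buy_eq_4 hby
        subst this
        have h4 := (hAmemR u' hu' 4).mp hy
        simp at h4
    · -- last = b'_u b_w : ends at b_w, w ∉ Q
      refine hend (Sum.inr (w,3))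
        (TradingNetwork.nonterminal_of N (Sum.inl (w,2)) (Sum.inl (w,4)) rfl rfl)
        (by simp [hNdef, hcase]) ?_
      intro y hy hsy
      have := sell_eq_3 hsy
      subst this
      have h4 := (hAmemR w hw 4).mp hy
      simp at h4
  · -- CYCLE CASE
    obtain ⟨h, hchain, hsnodup, hwrap⟩ := hcycle
    have hheadmem := List.head_mem h
    have hlastmem := List.getLast_mem h
    have hworld :
        (∀ x ∈ l, (∃ v, v ∈ Q ∧ (x = Sum.inl (v,1) ∨ x = Sum.inl (v,3))) ∨
          (∃ u w ha, u ∈ Q ∧ w ∈ Q ∧ x = Sum.inr (⟨(u,w),ha⟩, false))) ∨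
        (∀ x ∈ l, (∃ v, v ∉ Q ∧ (x = Sum.inl (v,4) ∨ x = Sum.inl (v,6))) ∨
          (∃ u w ha, u ∉ Q ∧ w ∉ Q ∧ x = Sum.inr (⟨(u,w),ha⟩, true))) := by
      rcases hclass _ hheadmem with hH | hH | hH | hH
      · exact Or.inl (chain'_all hchain h (Or.inl hH) hstepA)
      · exact Or.inl (chain'_all hchain h (Or.inr hH) hstepA)
      · exact Or.inr (chain'_all hchain h (Or.inl hH) hstepB)
      · exact Or.inr (chain'_all hchain h (Or.inr hH) hstepB)
    rcases hworld with hall | hall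
    · -- a-world cycle : extract a directed cycle inside Q
      have hP : ∀ x ∈ l, (∃ v, v ∈ Q ∧ x = Sum.inl (v,3)) ∨
          (∃ u w ha, u ∈ Q ∧ w ∈ Q ∧ x = Sum.inr (⟨(u,w),ha⟩, false)) := by
        intro x hx
        rcases hall x hx with ⟨v, hv, rfl | rfl⟩ | hZ
        · exfalso
          obtain ⟨y, hy, hby⟩ := cycle_pred h hchain hwrap _ hx
          simp only [hNdef, gadgetNet_buy, gadgetNet_sell, gS1] at hby
          have := buy_eq_0 hby
          subst this
          exact hnA _ hy ((hAmemQ v hv 0).mpr (by simp))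
        · exact Or.inl ⟨v, hv, rfl⟩
        · exact Or.inr hZ
      have h1 : ∀ x y : GContract V adj,
          ((∃ v, v ∈ Q ∧ x = Sum.inl (v,3)) ∨
            (∃ u w ha, u ∈ Q ∧ w ∈ Q ∧ x = Sum.inr (⟨(u,w),ha⟩, false))) →
          ((∃ v, v ∈ Q ∧ y = Sum.inl (v,3)) ∨
            (∃ u w ha, u ∈ Q ∧ w ∈ Q ∧ y = Sum.inr (⟨(u,w),ha⟩, false))) →
          N.buy x = N.sell y → gsv y = gbv x := by
        intro x y hx hy hxy
        rcases hx with ⟨v, hv, rfl⟩ | ⟨u, w, ha, hu, hw, rfl⟩ <;>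
          rcases hy with ⟨v', hv', rfl⟩ | ⟨u', w', ha', hu', hw', rfl⟩ <;>
          simp [hNdef] at hxy <;> simp [hxy]
      have h2 : ∀ x : GContract V adj,
          ((∃ v, v ∈ Q ∧ x = Sum.inl (v,3)) ∨
            (∃ u w ha, u ∈ Q ∧ w ∈ Q ∧ x = Sum.inr (⟨(u,w),ha⟩, false))) →
          (gsrc x = none ∧ gbv x = gsv x) ∨
          (gsrc x = some (gsv x) ∧ adj (gsv x) (gbv x) = true) := by
        intro x hx
        rcases hx with ⟨v, hv, rfl⟩ | ⟨u, w, ha, hu, hw, rfl⟩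
        · exact Or.inl ⟨rfl, rfl⟩
        · exact Or.inr ⟨rfl, ha⟩
      obtain ⟨hch, hhd⟩ := chainW N.sell N.buy gsv gbv gsrc _ h1 h2 l hchain hP h
      have hvl : l.filterMap gsrc ≠ [] := by
        intro hemp
        have hallnone := List.filterMap_eq_nil_iff.mp hemp
        rcases hP _ hheadmem with ⟨v0, hv0, hh⟩ | ⟨u0, w0, ha0, _, _, hh⟩
        · rcases hP _ hlastmem with ⟨w0, hw0, hg⟩ | ⟨u1, w1, ha1, _, _, hg⟩
          · rw [hh, hg] at hwrap
            simp [hNdef] at hwrap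
          · have := hallnone _ hlastmem
            rw [hg] at this
            simp at this
        · have := hallnone _ hheadmem
          rw [hh] at this
          simp at this
      have hnd : (l.filterMap gsrc).Nodup := by
        refine nodup_filterMap hsnodup ?_
        intro x hx y hy u hsx hsy
        rcases hP x hx with ⟨v0, _, rfl⟩ | ⟨u0, w0, ha0, _, _, rfl⟩
        · simp at hsx
        · rcases hP y hy with ⟨v1, _, rfl⟩ | ⟨u1, w1, ha1, _, _, rfl⟩
          · simp at hsy
          · simp only [gsrc_inr, Option.some.injEq] at hsx hsy
            subst hsx
            subst hsy
            rfl
      have hmem : ∀ v ∈ l.filterMap gsrc, v ∈ Q := by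
        intro v hv
        obtain ⟨x, hx, hxv⟩ := List.mem_filterMap.mp hv
        rcases hP x hx with ⟨v0, _, rfl⟩ | ⟨u0, w0, ha0, hu0, _, rfl⟩
        · simp at hxv
        · simp only [gsrc_inr, Option.some.injEq] at hxv
          subst hxv
          exact hu0
      have hsvbv : gsv (l.head h) = gbv (l.getLast h) :=
        h1 _ _ (hP _ hlastmem) (hP _ hheadmem) hwrap
      have hsplit := List.isChain_append.mp hch
      have hstep2 : adj ((l.filterMap gsrc).getLast hvl) (gbv (l.getLast h)) = true :=
        hsplit.2.2 _ (List.getLast?_eq_getLast hvl) _ rfl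
      have hh' : (l.filterMap gsrc).head? = some (gsv (l.head h)) := by
        rw [← hhd]
        cases hvc : l.filterMap gsrc with
        | nil => exact absurd hvc hvl
        | cons a t => simp
      have hheads : (l.filterMap gsrc).head hvl = gsv (l.head h) := by
        have h0 := List.head?_eq_head hvl
        rw [h0] at hh'
        exact Option.some.inj hh'
      refine hQ ⟨l.filterMap gsrc, hvl, hnd, hmem, hsplit.1, ?_⟩
      rw [hheads, hsvbv]
      exact hstep2
    · -- b-world cycle : extract a directed cycle inside Qᶜ
      have hP : ∀ x ∈ l, (∃ v, v ∉ Q ∧ x = Sum.inl (v,4)) ∨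
          (∃ u w ha, u ∉ Q ∧ w ∉ Q ∧ x = Sum.inr (⟨(u,w),ha⟩, true)) := by
        intro x hx
        rcases hall x hx with ⟨v, hv, rfl | rfl⟩ | hZ
        · exact Or.inl ⟨v, hv, rfl⟩
        · exfalso
          obtain ⟨y, hy, hsy⟩ := cycle_succ h hchain hwrap _ hx
          simp only [hNdef, gadgetNet_buy, gadgetNet_sell, gB6] at hsy
          have := sell_eq_5 hsy
          subst this
          exact hnA _ hy ((hAmemR v hv 7).mpr (by simp))
        · exact Or.inr hZ
      have h1 : ∀ x y : GContract V adj,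
          ((∃ v, v ∉ Q ∧ x = Sum.inl (v,4)) ∨
            (∃ u w ha, u ∉ Q ∧ w ∉ Q ∧ x = Sum.inr (⟨(u,w),ha⟩, true))) →
          ((∃ v, v ∉ Q ∧ y = Sum.inl (v,4)) ∨
            (∃ u w ha, u ∉ Q ∧ w ∉ Q ∧ y = Sum.inr (⟨(u,w),ha⟩, true))) →
          N.buy x = N.sell y → gsv y = gbv x := by
        intro x y hx hy hxy
        rcases hx with ⟨v, hv, rfl⟩ | ⟨u, w, ha, hu, hw, rfl⟩ <;>
          rcases hy with ⟨v', hv', rfl⟩ | ⟨u', w', ha', hu', hw', rfl⟩ <;>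
          simp [hNdef] at hxy <;> simp [hxy]
      have h2 : ∀ x : GContract V adj,
          ((∃ v, v ∉ Q ∧ x = Sum.inl (v,4)) ∨
            (∃ u w ha, u ∉ Q ∧ w ∉ Q ∧ x = Sum.inr (⟨(u,w),ha⟩, true))) →
          (gsrc x = none ∧ gbv x = gsv x) ∨
          (gsrc x = some (gsv x) ∧ adj (gsv x) (gbv x) = true) := by
        intro x hx
        rcases hx with ⟨v, hv, rfl⟩ | ⟨u, w, ha, hu, hw, rfl⟩
        · exact Or.inl ⟨rfl, rfl⟩
        · exact Or.inr ⟨rfl, ha⟩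
      obtain ⟨hch, hhd⟩ := chainW N.sell N.buy gsv gbv gsrc _ h1 h2 l hchain hP h
      have hvl : l.filterMap gsrc ≠ [] := by
        intro hemp
        have hallnone := List.filterMap_eq_nil_iff.mp hemp
        rcases hP _ hheadmem with ⟨v0, hv0, hh⟩ | ⟨u0, w0, ha0, _, _, hh⟩
        · rcases hP _ hlastmem with ⟨w0, hw0, hg⟩ | ⟨u1, w1, ha1, _, _, hg⟩
          · rw [hh, hg] at hwrap
            simp [hNdef] at hwrap
          · have := hallnone _ hlastmem
            rw [hg] at this
            simp at this
        · have := hallnone _ hheadmem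
          rw [hh] at this
          simp at this
      have hnd : (l.filterMap gsrc).Nodup := by
        refine nodup_filterMap hsnodup ?_
        intro x hx y hy u hsx hsy
        rcases hP x hx with ⟨v0, _, rfl⟩ | ⟨u0, w0, ha0, _, _, rfl⟩
        · simp at hsx
        · rcases hP y hy with ⟨v1, _, rfl⟩ | ⟨u1, w1, ha1, _, _, rfl⟩
          · simp at hsy
          · simp only [gsrc_inr, Option.some.injEq] at hsx hsy
            subst hsx
            subst hsy
            rfl
      have hmem : ∀ v ∈ l.filterMap gsrc, v ∈ Qᶜ := by
        intro v hv
        obtain ⟨x, hx, hxv⟩ := List.mem_filterMap.mp hv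
        rcases hP x hx with ⟨v0, _, rfl⟩ | ⟨u0, w0, ha0, hu0, _, rfl⟩
        · simp at hxv
        · simp only [gsrc_inr, Option.some.injEq] at hxv
          subst hxv
          exact Finset.mem_compl.mpr hu0
      have hsvbv : gsv (l.head h) = gbv (l.getLast h) :=
        h1 _ _ (hP _ hlastmem) (hP _ hheadmem) hwrap
      have hsplit := List.isChain_append.mp hch
      have hstep2 : adj ((l.filterMap gsrc).getLast hvl) (gbv (l.getLast h)) = true :=
        hsplit.2.2 _ (List.getLast?_eq_getLast hvl) _ rfl
      have hh' : (l.filterMap gsrc).head? = some (gsv (l.head h)) := by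
        rw [← hhd]
        cases hvc : l.filterMap gsrc with
        | nil => exact absurd hvc hvl
        | cons a t => simp
      have hheads : (l.filterMap gsrc).head hvl = gsv (l.head h) := by
        have h0 := List.head?_eq_head hvl
        rw [h0] at hh'
        exact Option.some.inj hh'
      refine hR ⟨l.filterMap gsrc, hvl, hnd, hmem, hsplit.1, ?_⟩
      rw [hheads, hsvbv]
      exact hstep2
end
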